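/- arXiv:1708.08440 — 7 statements merged into one kernel-verified Lean document; each statement's English description precedes it below -/
import Mathlib

section
/- For every c > 0, x > 0 and t > 0, with λ := c²/2 and h(x) := x e^{c x}/√(2π λ²), the survival-probability integral F(x,t) := ∫_t^∞ x (2π s³)^{−1/2} exp(c x − λ s − x²/(2s)) ds satisfies the two-sided bound e^{−x²/(2t)} (1 − 3/(2λ t)) · h(x) t^{−3/2} e^{−λ t} ≤ F(x,t) ≤ h(x) t^{−3/2} e^{−λ t}. (In particular F(x,t) = h(x) t^{−3/2} e^{−λ t}(1+ε(x,t)) with e^{−x²/(2t)}(1−3/(2λt)) ≤ 1+ε(x,t) ≤ 1.) -/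
open Real MeasureTheory

/-- exp(-(l s)) tends to 0 at infinity. -/
private lemma exp_neg_tendsto (l : ℝ) (hl : 0 < l) :
    Filter.Tendsto (fun s : ℝ => Real.exp (-(l * s))) Filter.atTop (nhds 0) := by
  have h1 : Filter.Tendsto (fun s : ℝ => l * s) Filter.atTop Filter.atTop :=
    Filter.Tendsto.const_mul_atTop hl Filter.tendsto_id
  have h2 : Filter.Tendsto (fun s : ℝ => -(l * s)) Filter.atTop Filter.atBot :=
    Filter.tendsto_neg_atTop_atBot.comp h1
  exact Real.tendsto_exp_atBot.comp h2

private lemma exp_neg_integrable (l t : ℝ) (hl : 0 < l) :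
    IntegrableOn (fun s : ℝ => Real.exp (-(l * s))) (Set.Ioi t) := by
  simpa [neg_mul] using exp_neg_integrableOn_Ioi t hl

/-- ∫_t^∞ e^{-l s} ds = e^{-l t} / l -/
private lemma integral_exp_neg (l t : ℝ) (hl : 0 < l) :
    ∫ s in Set.Ioi t, Real.exp (-(l * s)) = Real.exp (-(l * t)) / l := by
  have hd : ∀ s : ℝ, HasDerivAt (fun u => -Real.exp (-(l * u)) / l)
      (Real.exp (-(l * s))) s := by
    intro s
    have h1 : HasDerivAt (fun u : ℝ => -(l * u)) (-l) s := by
      simpa using ((hasDerivAt_id s).const_mul (-l))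
    have h2 := (Real.hasDerivAt_exp (-(l * s))).comp s h1
    have h3 := h2.neg.div_const l
    refine h3.congr_deriv ?_
    rw [mul_neg, neg_neg, mul_div_assoc, div_self hl.ne', mul_one]
  have htend : Filter.Tendsto (fun u : ℝ => -Real.exp (-(l * u)) / l)
      Filter.atTop (nhds 0) := by
    have := ((exp_neg_tendsto l hl).neg).div_const l
    simpa using this
  have := integral_Ioi_of_hasDerivAt_of_tendsto
    (f := fun u => -Real.exp (-(l * u)) / l)
    (f' := fun s => Real.exp (-(l * s))) (a := t) (m := 0)
    (hd t).continuousAt.continuousWithinAt (fun s _ => hd s)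
    (exp_neg_integrable l t hl) htend
  rw [this]; ring

/-- The integrand of the lower-bound antiderivative. -/
private lemma psi_integrable (l t : ℝ) (hl : 0 < l) (ht : 0 < t) :
    IntegrableOn (fun s : ℝ =>
      Real.exp (-(l * s)) * (s ^ (-(3:ℝ)/2) - 15 / (4 * l ^ 2) * s ^ (-(7:ℝ)/2)))
      (Set.Ioi t) := by
  have hbound : IntegrableOn
      (fun s : ℝ => (t ^ (-(3:ℝ)/2) + 15 / (4 * l ^ 2) * t ^ (-(7:ℝ)/2)) *
        Real.exp (-(l * s))) (Set.Ioi t) :=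
    (exp_neg_integrable l t hl).const_mul _
  have hmeas : AEStronglyMeasurable (fun s : ℝ =>
      Real.exp (-(l * s)) * (s ^ (-(3:ℝ)/2) - 15 / (4 * l ^ 2) * s ^ (-(7:ℝ)/2)))
      (volume.restrict (Set.Ioi t)) := by
    apply ContinuousOn.aestronglyMeasurable _ measurableSet_Ioi
    apply ContinuousOn.mul
    · exact (Real.continuous_exp.comp (continuous_const.mul continuous_id).neg).continuousOn
    · apply ContinuousOn.sub
      · exact continuousOn_id.rpow_const fun s hs => Or.inl (ne_of_gt (ht.trans hs))
      · exact continuousOn_const.mul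
          (continuousOn_id.rpow_const fun s hs => Or.inl (ne_of_gt (ht.trans hs)))
  apply Integrable.mono' hbound hmeas
  filter_upwards [ae_restrict_mem measurableSet_Ioi] with s hs
  have hts : t ≤ s := le_of_lt hs
  have hs0 : 0 < s := ht.trans hs
  have h3 : s ^ (-(3:ℝ)/2) ≤ t ^ (-(3:ℝ)/2) := by
    have := Real.rpow_le_rpow_of_nonpos ht hts (show (-(3:ℝ)/2) ≤ 0 by norm_num)
    exact this
  have h7 : s ^ (-(7:ℝ)/2) ≤ t ^ (-(7:ℝ)/2) :=
    Real.rpow_le_rpow_of_nonpos ht hts (by norm_num)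
  have hp3 : (0:ℝ) ≤ s ^ (-(3:ℝ)/2) := Real.rpow_nonneg hs0.le _
  have hp7 : (0:ℝ) ≤ s ^ (-(7:ℝ)/2) := Real.rpow_nonneg hs0.le _
  have hq : (0:ℝ) ≤ 15 / (4 * l ^ 2) := by positivity
  rw [Real.norm_eq_abs, abs_mul, Real.abs_exp]
  have habs : |s ^ (-(3:ℝ)/2) - 15 / (4 * l ^ 2) * s ^ (-(7:ℝ)/2)|
      ≤ t ^ (-(3:ℝ)/2) + 15 / (4 * l ^ 2) * t ^ (-(7:ℝ)/2) := by
    rw [abs_sub_le_iff]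
    constructor
    · nlinarith
    · nlinarith
  calc Real.exp (-(l * s)) * |s ^ (-(3:ℝ)/2) - 15 / (4 * l ^ 2) * s ^ (-(7:ℝ)/2)|
      ≤ Real.exp (-(l * s)) * (t ^ (-(3:ℝ)/2) + 15 / (4 * l ^ 2) * t ^ (-(7:ℝ)/2)) := by
        exact mul_le_mul_of_nonneg_left habs (Real.exp_nonneg _)
    _ = (t ^ (-(3:ℝ)/2) + 15 / (4 * l ^ 2) * t ^ (-(7:ℝ)/2)) * Real.exp (-(l * s)) := by
        ring

/-- FTC computation of the lower-bound integral. -/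
private lemma integral_psi (l t : ℝ) (hl : 0 < l) (ht : 0 < t) :
    ∫ s in Set.Ioi t,
      Real.exp (-(l * s)) * (s ^ (-(3:ℝ)/2) - 15 / (4 * l ^ 2) * s ^ (-(7:ℝ)/2))
    = Real.exp (-(l * t)) * (t ^ (-(3:ℝ)/2) / l - 3 / (2 * l ^ 2) * t ^ (-(5:ℝ)/2)) := by
  set φ : ℝ → ℝ := fun u =>
    -(Real.exp (-(l * u)) * (u ^ (-(3:ℝ)/2) / l - 3 / (2 * l ^ 2) * u ^ (-(5:ℝ)/2))) with hφ
  have hd : ∀ s : ℝ, 0 < s → HasDerivAt φ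
      (Real.exp (-(l * s)) * (s ^ (-(3:ℝ)/2) - 15 / (4 * l ^ 2) * s ^ (-(7:ℝ)/2))) s := by
    intro s hs
    have h1 : HasDerivAt (fun u : ℝ => -(l * u)) (-l) s := by
      simpa using ((hasDerivAt_id s).const_mul (-l))
    have hexp := (Real.hasDerivAt_exp (-(l * s))).comp s h1
    have hp3 : HasDerivAt (fun u : ℝ => u ^ (-(3:ℝ)/2))
        ((-(3:ℝ)/2) * s ^ ((-(3:ℝ)/2) - 1)) s :=
      Real.hasDerivAt_rpow_const (Or.inl hs.ne')
    have hp5 : HasDerivAt (fun u : ℝ => u ^ (-(5:ℝ)/2))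
        ((-(5:ℝ)/2) * s ^ ((-(5:ℝ)/2) - 1)) s :=
      Real.hasDerivAt_rpow_const (Or.inl hs.ne')
    have hin := (hp3.div_const l).sub (hp5.const_mul (3 / (2 * l ^ 2)))
    have hmul := (hexp.mul hin).neg
    refine hmul.congr_deriv ?_
    have e1 : (-(3:ℝ)/2 - 1) = (-(5:ℝ)/2) := by norm_num
    have e2 : (-(5:ℝ)/2 - 1) = (-(7:ℝ)/2) := by norm_num
    rw [e1, e2]
    simp only [Function.comp_apply, Pi.sub_apply]
    field_simp
    ring
  have htend : Filter.Tendsto φ Filter.atTop (nhds 0) := by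
    have t3 : Filter.Tendsto (fun s : ℝ => s ^ (-(3:ℝ)/2)) Filter.atTop (nhds 0) := by
      have := tendsto_rpow_neg_atTop (show (0:ℝ) < 3/2 by norm_num)
      simpa [neg_div] using this
    have t5 : Filter.Tendsto (fun s : ℝ => s ^ (-(5:ℝ)/2)) Filter.atTop (nhds 0) := by
      have := tendsto_rpow_neg_atTop (show (0:ℝ) < 5/2 by norm_num)
      simpa [neg_div] using this
    have tin := (t3.div_const l).sub (t5.const_mul (3 / (2 * l ^ 2)))
    have := ((exp_neg_tendsto l hl).mul tin).neg
    simpa using this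
  have := integral_Ioi_of_hasDerivAt_of_tendsto (f := φ)
    (f' := fun s => Real.exp (-(l * s)) *
      (s ^ (-(3:ℝ)/2) - 15 / (4 * l ^ 2) * s ^ (-(7:ℝ)/2))) (a := t) (m := 0)
    (hd t ht).continuousAt.continuousWithinAt
    (fun s hs => hd s (ht.trans hs)) (psi_integrable l t hl ht) htend
  rw [this, hφ]
  ring

theorem survival_probability_two_sided_bound
    (c : ℝ) (hc : 0 < c) (x t : ℝ) (hx : 0 < x) (ht : 0 < t) :
    (Real.exp (-x ^ 2 / (2 * t)) * (1 - 3 / (2 * (c ^ 2 / 2) * t)) *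
        (x * Real.exp (c * x) / Real.sqrt (2 * π * (c ^ 2 / 2) ^ 2)) *
        t ^ (-(3 / 2 : ℝ)) * Real.exp (-(c ^ 2 / 2) * t)
      ≤ ∫ s in Set.Ioi t,
          x * (Real.sqrt (2 * π * s ^ 3))⁻¹ *
            Real.exp (c * x - c ^ 2 / 2 * s - x ^ 2 / (2 * s))) ∧
    (∫ s in Set.Ioi t,
        x * (Real.sqrt (2 * π * s ^ 3))⁻¹ *
          Real.exp (c * x - c ^ 2 / 2 * s - x ^ 2 / (2 * s)))
      ≤ (x * Real.exp (c * x) / Real.sqrt (2 * π * (c ^ 2 / 2) ^ 2)) *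
          t ^ (-(3 / 2 : ℝ)) * Real.exp (-(c ^ 2 / 2) * t) := by
  set l : ℝ := c ^ 2 / 2 with hldef
  have hl : 0 < l := by positivity
  set K : ℝ := x * Real.exp (c * x) / Real.sqrt (2 * π) with hKdef
  have hK : 0 < K := by
    apply div_pos (by positivity)
    exact Real.sqrt_pos.mpr (by positivity)
  -- rewrite the integrand
  have hre : Set.EqOn
      (fun s : ℝ => x * (Real.sqrt (2 * π * s ^ 3))⁻¹ *
        Real.exp (c * x - l * s - x ^ 2 / (2 * s)))
      (fun s : ℝ => K * (Real.exp (-(l * s)) *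
        (s ^ (-(3:ℝ)/2) * Real.exp (-(x ^ 2 / (2 * s)))))) (Set.Ioi t) := by
    intro s hs
    have hs0 : 0 < s := ht.trans hs
    have hsq : Real.sqrt (2 * π * s ^ 3) = Real.sqrt (2 * π) * s ^ ((3:ℝ)/2) := by
      rw [Real.sqrt_mul (by positivity)]
      congr 1
      rw [show s ^ 3 = s ^ ((3:ℕ):ℝ) from (Real.rpow_natCast s 3).symm,
        Real.sqrt_eq_rpow, ← Real.rpow_mul hs0.le]
      norm_num
    have hexp : Real.exp (c * x - l * s - x ^ 2 / (2 * s))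
        = Real.exp (c * x) * Real.exp (-(l * s)) * Real.exp (-(x ^ 2 / (2 * s))) := by
      rw [← Real.exp_add, ← Real.exp_add]; ring_nf
    have hpow : (s ^ ((3:ℝ)/2))⁻¹ = s ^ (-(3:ℝ)/2) := by
      rw [show (-(3:ℝ)/2) = -((3:ℝ)/2) by norm_num, Real.rpow_neg hs0.le]
    simp only
    rw [hsq, hexp, mul_inv, hpow, hKdef]
    have hS : Real.sqrt (2 * π) ≠ 0 := ne_of_gt (Real.sqrt_pos.mpr (by positivity))
    field_simp
  rw [setIntegral_congr_fun measurableSet_Ioi hre]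
  -- integrability facts
  have hintbound : IntegrableOn
      (fun s : ℝ => (K * (t ^ (-(3:ℝ)/2) * 1)) * Real.exp (-(l * s))) (Set.Ioi t) :=
    (exp_neg_integrable l t hl).const_mul _
  have hg_meas : AEStronglyMeasurable
      (fun s : ℝ => K * (Real.exp (-(l * s)) *
        (s ^ (-(3:ℝ)/2) * Real.exp (-(x ^ 2 / (2 * s))))))
      (volume.restrict (Set.Ioi t)) := by
    apply ContinuousOn.aestronglyMeasurable _ measurableSet_Ioi
    apply ContinuousOn.mul continuousOn_const
    apply ContinuousOn.mul
    · exact (Real.continuous_exp.comp (continuous_const.mul continuous_id).neg).continuousOn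
    · apply ContinuousOn.mul
      · exact continuousOn_id.rpow_const fun s hs => Or.inl (ne_of_gt (ht.trans hs))
      · apply Real.continuous_exp.comp_continuousOn
        apply ContinuousOn.neg
        apply ContinuousOn.div continuousOn_const (continuous_const.mul continuous_id).continuousOn
        intro s hs
        exact mul_ne_zero two_ne_zero (ne_of_gt (ht.trans hs))
  have hptwise_ub : ∀ s ∈ Set.Ioi t,
      K * (Real.exp (-(l * s)) * (s ^ (-(3:ℝ)/2) * Real.exp (-(x ^ 2 / (2 * s)))))
      ≤ (K * (t ^ (-(3:ℝ)/2) * 1)) * Real.exp (-(l * s)) := by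
    intro s hs
    have hs0 : 0 < s := ht.trans hs
    have h3 : s ^ (-(3:ℝ)/2) ≤ t ^ (-(3:ℝ)/2) :=
      Real.rpow_le_rpow_of_nonpos ht (le_of_lt hs) (by norm_num)
    have hE : Real.exp (-(x ^ 2 / (2 * s))) ≤ 1 := by
      rw [Real.exp_le_one_iff]
      have : 0 ≤ x ^ 2 / (2 * s) := by positivity
      linarith
    have hrw : (K * (t ^ (-(3:ℝ)/2) * 1)) * Real.exp (-(l * s))
        = K * (Real.exp (-(l * s)) * (t ^ (-(3:ℝ)/2) * 1)) := by ring
    rw [hrw]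
    apply mul_le_mul_of_nonneg_left _ hK.le
    apply mul_le_mul_of_nonneg_left _ (Real.exp_nonneg _)
    exact mul_le_mul h3 hE (Real.exp_pos _).le (Real.rpow_nonneg ht.le _)
  have hg_int : IntegrableOn
      (fun s : ℝ => K * (Real.exp (-(l * s)) *
        (s ^ (-(3:ℝ)/2) * Real.exp (-(x ^ 2 / (2 * s)))))) (Set.Ioi t) := by
    apply Integrable.mono' hintbound hg_meas
    filter_upwards [ae_restrict_mem measurableSet_Ioi] with s hs
    have hs0 : 0 < s := ht.trans hs
    rw [Real.norm_eq_abs, abs_of_nonneg (by positivity)]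
    exact hptwise_ub s hs
  constructor
  · -- lower bound
    set B0 : ℝ := Real.exp (-(x ^ 2 / (2 * t))) with hB0
    have hB0pos : 0 < B0 := Real.exp_pos _
    have hlow_int : IntegrableOn (fun s : ℝ => (K * B0) *
        (Real.exp (-(l * s)) * (s ^ (-(3:ℝ)/2) - 15 / (4 * l ^ 2) * s ^ (-(7:ℝ)/2))))
        (Set.Ioi t) := (psi_integrable l t hl ht).const_mul _
    have hptwise_lb : ∀ s ∈ Set.Ioi t,
        (K * B0) * (Real.exp (-(l * s)) *
          (s ^ (-(3:ℝ)/2) - 15 / (4 * l ^ 2) * s ^ (-(7:ℝ)/2)))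
        ≤ K * (Real.exp (-(l * s)) * (s ^ (-(3:ℝ)/2) * Real.exp (-(x ^ 2 / (2 * s))))) := by
      intro s hs
      have hs0 : 0 < s := ht.trans hs
      have hB : B0 ≤ Real.exp (-(x ^ 2 / (2 * s))) := by
        rw [hB0, Real.exp_le_exp, neg_le_neg_iff]
        apply div_le_div_of_nonneg_left (by positivity) (by positivity)
        linarith [le_of_lt (Set.mem_Ioi.mp hs)]
      calc (K * B0) * (Real.exp (-(l * s)) *
            (s ^ (-(3:ℝ)/2) - 15 / (4 * l ^ 2) * s ^ (-(7:ℝ)/2)))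
          ≤ (K * B0) * (Real.exp (-(l * s)) * s ^ (-(3:ℝ)/2)) := by
            apply mul_le_mul_of_nonneg_left _ (by positivity)
            apply mul_le_mul_of_nonneg_left _ (Real.exp_nonneg _)
            exact sub_le_self _ (by positivity)
        _ = K * (Real.exp (-(l * s)) * (s ^ (-(3:ℝ)/2) * B0)) := by ring
        _ ≤ K * (Real.exp (-(l * s)) * (s ^ (-(3:ℝ)/2) * Real.exp (-(x ^ 2 / (2 * s))))) := by
            apply mul_le_mul_of_nonneg_left _ hK.le
            apply mul_le_mul_of_nonneg_left _ (Real.exp_nonneg _)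
            exact mul_le_mul_of_nonneg_left hB (Real.rpow_nonneg hs0.le _)
    have hmono := setIntegral_mono_on hlow_int hg_int measurableSet_Ioi hptwise_lb
    have hval : ∫ s in Set.Ioi t, (K * B0) *
        (Real.exp (-(l * s)) * (s ^ (-(3:ℝ)/2) - 15 / (4 * l ^ 2) * s ^ (-(7:ℝ)/2)))
        = (K * B0) * (Real.exp (-(l * t)) *
          (t ^ (-(3:ℝ)/2) / l - 3 / (2 * l ^ 2) * t ^ (-(5:ℝ)/2))) := by
      rw [MeasureTheory.integral_const_mul, integral_psi l t hl ht]
    rw [hval] at hmono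
    refine le_trans (le_of_eq ?_) hmono
    -- algebraic identity
    have hsqrt : Real.sqrt (2 * π * l ^ 2) = Real.sqrt (2 * π) * l := by
      rw [Real.sqrt_mul (by positivity), Real.sqrt_sq hl.le]
    have ht5 : t ^ (-(5:ℝ)/2) = t ^ (-(3:ℝ)/2) * t⁻¹ := by
      rw [show (-(5:ℝ)/2) = (-(3:ℝ)/2) + (-1) by norm_num, Real.rpow_add ht,
        Real.rpow_neg_one]
    have hexp32 : t ^ (-(3/2 : ℝ)) = t ^ (-(3:ℝ)/2) := by norm_num
    have hnegdiv : Real.exp (-x ^ 2 / (2 * t)) = B0 := by rw [hB0, neg_div]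
    rw [hnegdiv, hexp32, hsqrt, hKdef, ht5]
    have hS : Real.sqrt (2 * π) ≠ 0 := ne_of_gt (Real.sqrt_pos.mpr (by positivity))
    field_simp
  · -- upper bound
    have hmono := setIntegral_mono_on hg_int hintbound measurableSet_Ioi hptwise_ub
    refine le_trans hmono (le_of_eq ?_)
    rw [MeasureTheory.integral_const_mul, integral_exp_neg l t hl]
    have hsqrt : Real.sqrt (2 * π * l ^ 2) = Real.sqrt (2 * π) * l := by
      rw [Real.sqrt_mul (by positivity), Real.sqrt_sq hl.le]
    have hexp32 : t ^ (-(3/2 : ℝ)) = t ^ (-(3:ℝ)/2) := by norm_num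
    rw [hexp32, hsqrt, hKdef]
    have hS : Real.sqrt (2 * π) ≠ 0 := ne_of_gt (Real.sqrt_pos.mpr (by positivity))
    field_simp
end

section
/- There exists a constant C > 0, depending only on c, such that for every x > 0, t > 0 and every Borel set B ⊆ (0,∞), writing ε_B(x,t) := (t^{3/2} e^{λ t} / h(x)) · ∫_B p_t(x,y) dy − ν(B), one has |ε_B(x,t)| ≤ min( C (x+1)² / t , 2 ). Equivalently, ∫_B p_t(x,y) dy = h(x) t^{−3/2} e^{−λ t} (ν(B) + ε_B(x,t)) with the stated bound on the error term. -/
open Real MeasureTheory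

set_option maxHeartbeats 1600000

lemma aux_ident (c x t y : ℝ) (hc : 0 < c) (hx : 0 < x) (ht : 0 < t) :
    (t ^ (3 / 2 : ℝ) * Real.exp (c ^ 2 / 2 * t) /
        (x * Real.exp (c * x) / Real.sqrt (2 * π * (c ^ 2 / 2) ^ 2))) *
      (Real.exp (-(c * (y - x)) - c ^ 2 / 2 * t) * (Real.sqrt (2 * π * t))⁻¹ *
        (Real.exp (-(x - y) ^ 2 / (2 * t)) - Real.exp (-(x + y) ^ 2 / (2 * t))))
    = c ^ 2 / 2 * t / x * Real.exp (-(c * y)) *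
        (Real.exp (-(x - y) ^ 2 / (2 * t)) - Real.exp (-(x + y) ^ 2 / (2 * t))) := by
  have hπ : 0 < π := Real.pi_pos
  have h1 : Real.sqrt (2 * π * (c ^ 2 / 2) ^ 2) = Real.sqrt (2 * π) * (c ^ 2 / 2) := by
    rw [Real.sqrt_mul (by positivity), Real.sqrt_sq (by positivity)]
  have h2 : Real.sqrt (2 * π * t) = Real.sqrt (2 * π) * Real.sqrt t := by
    rw [Real.sqrt_mul (by positivity)]
  have h3 : t ^ (3 / 2 : ℝ) = t * Real.sqrt t := by
    rw [show (3 / 2 : ℝ) = 1 + 1 / 2 by norm_num, Real.rpow_add ht, Real.rpow_one,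
      ← Real.sqrt_eq_rpow]
  have h4 : Real.exp (-(c * (y - x)) - c ^ 2 / 2 * t)
      = Real.exp (-(c * y)) * Real.exp (c * x) * Real.exp (-(c ^ 2 / 2 * t)) := by
    rw [← Real.exp_add, ← Real.exp_add]; ring_nf
  have h5 : Real.exp (-(c ^ 2 / 2 * t)) = (Real.exp (c ^ 2 / 2 * t))⁻¹ := Real.exp_neg _
  rw [h1, h2, h3, h4, h5]
  have hsq : Real.sqrt t ≠ 0 := by positivity
  have hsp : Real.sqrt (2 * π) ≠ 0 := by positivity
  field_simp

lemma aux_ptwise (c x t y : ℝ) (hc : 0 < c) (hx : 0 < x) (ht : 0 < t) (hy : 0 < y) :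
    0 ≤ c ^ 2 / 2 * t / x * Real.exp (-(c * y)) *
        (Real.exp (-(x - y) ^ 2 / (2 * t)) - Real.exp (-(x + y) ^ 2 / (2 * t)))
    ∧ c ^ 2 / 2 * t / x * Real.exp (-(c * y)) *
        (Real.exp (-(x - y) ^ 2 / (2 * t)) - Real.exp (-(x + y) ^ 2 / (2 * t)))
      ≤ 2 * (c ^ 2 / 2) * y * Real.exp (-(c * y))
    ∧ 2 * (c ^ 2 / 2) * y * Real.exp (-(c * y))
        - c ^ 2 / 2 * t / x * Real.exp (-(c * y)) *
          (Real.exp (-(x - y) ^ 2 / (2 * t)) - Real.exp (-(x + y) ^ 2 / (2 * t)))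
      ≤ (x + 1) ^ 2 / t * (c ^ 2 * y * (1 + y ^ 2) * Real.exp (-(c * y))) := by
  obtain ⟨u, hu⟩ : ∃ u : ℝ, u = x * y / t := ⟨_, rfl⟩
  obtain ⟨s, hs⟩ : ∃ s : ℝ, s = (x ^ 2 + y ^ 2) / (2 * t) := ⟨_, rfl⟩
  have hu0 : 0 < u := by rw [hu]; positivity
  have hs0 : 0 < s := by rw [hs]; positivity
  have hus : u ≤ s := by
    rw [hu, hs, div_le_div_iff₀ ht (by positivity)]
    nlinarith [sq_nonneg (x - y)]
  have ht' : t ≠ 0 := ht.ne'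
  have e1 : -(x - y) ^ 2 / (2 * t) = u - s := by rw [hu, hs]; field_simp; ring
  have e2 : -(x + y) ^ 2 / (2 * t) = -u - s := by rw [hu, hs]; field_simp; ring
  rw [e1, e2]
  have hE1 : Real.exp (u - s) = Real.exp u * Real.exp (-s) := by
    rw [← Real.exp_add]; ring_nf
  have hE2 : Real.exp (-u - s) = Real.exp (-u) * Real.exp (-s) := by
    rw [← Real.exp_add]; ring_nf
  have hinv : Real.exp u * Real.exp (-u) = 1 := by
    rw [← Real.exp_add]; simp
  have hsinh : 2 * u ≤ Real.exp u - Real.exp (-u) := by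
    have := Real.self_le_sinh_iff.mpr hu0.le
    rw [Real.sinh_eq] at this; linarith
  have hub : Real.exp u - Real.exp (-u) ≤ 2 * u * Real.exp u := by
    have h := Real.add_one_le_exp (-(2 * u))
    have h2 : Real.exp (-(2 * u)) = Real.exp (-u) * Real.exp (-u) := by
      rw [← Real.exp_add]; ring_nf
    nlinarith [Real.exp_pos u, Real.exp_pos (-u)]
  have hpos1 : (0:ℝ) < Real.exp (-s) := Real.exp_pos _
  have hposy : (0:ℝ) < Real.exp (-(c * y)) := Real.exp_pos _
  have hdiff : 0 ≤ Real.exp u - Real.exp (-u) := by linarith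
  have hEle : Real.exp (u - s) - Real.exp (-u - s) ≤ 2 * u := by
    have hexpus : Real.exp u * Real.exp (-s) ≤ 1 := by
      rw [← Real.exp_add]; exact Real.exp_le_one_iff.mpr (by linarith)
    rw [hE1, hE2]
    nlinarith [mul_le_mul_of_nonneg_right hub hpos1.le,
      mul_le_mul_of_nonneg_left hexpus (by positivity : (0:ℝ) ≤ 2 * u)]
  have hEge : 0 ≤ Real.exp (u - s) - Real.exp (-u - s) := by
    have : -u - s ≤ u - s := by linarith
    linarith [Real.exp_le_exp.mpr this]
  refine ⟨by positivity, ?_, ?_⟩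
  · have key : c ^ 2 / 2 * t / x * (Real.exp (u - s) - Real.exp (-u - s))
        ≤ 2 * (c ^ 2 / 2) * y := by
      calc c ^ 2 / 2 * t / x * (Real.exp (u - s) - Real.exp (-u - s))
          ≤ c ^ 2 / 2 * t / x * (2 * u) := by
            apply mul_le_mul_of_nonneg_left hEle (by positivity)
        _ = 2 * (c ^ 2 / 2) * y := by rw [hu]; field_simp
    nlinarith
  · -- lower bound part
    have hE3 : (1 - s) * (2 * u) ≤ Real.exp (u - s) - Real.exp (-u - s) := by
      rcases le_or_gt 1 s with h | h
      · nlinarith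
      · rw [hE1, hE2]
        have h1s : 1 - s ≤ Real.exp (-s) := by linarith [Real.add_one_le_exp (-s)]
        calc (1 - s) * (2 * u)
            ≤ (1 - s) * (Real.exp u - Real.exp (-u)) :=
              mul_le_mul_of_nonneg_left hsinh (by linarith)
          _ ≤ Real.exp (-s) * (Real.exp u - Real.exp (-u)) :=
              mul_le_mul_of_nonneg_right h1s hdiff
          _ = Real.exp u * Real.exp (-s) - Real.exp (-u) * Real.exp (-s) := by ring
    have key : 2 * (c ^ 2 / 2) * y * (1 - s)
        ≤ c ^ 2 / 2 * t / x * (Real.exp (u - s) - Real.exp (-u - s)) := by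
      have h2 : c ^ 2 / 2 * t / x * ((1 - s) * (2 * u)) = 2 * (c ^ 2 / 2) * y * (1 - s) := by
        rw [hu]; field_simp
      calc 2 * (c ^ 2 / 2) * y * (1 - s) = c ^ 2 / 2 * t / x * ((1 - s) * (2 * u)) := h2.symm
        _ ≤ c ^ 2 / 2 * t / x * (Real.exp (u - s) - Real.exp (-u - s)) := by
            apply mul_le_mul_of_nonneg_left hE3 (by positivity)
    have hsbound : s ≤ (x + 1) ^ 2 / t * (1 + y ^ 2) := by
      have hnum : x ^ 2 + y ^ 2 ≤ 2 * ((x + 1) ^ 2 * (1 + y ^ 2)) := by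
        nlinarith [mul_nonneg (mul_nonneg hx.le hx.le) (sq_nonneg y),
          mul_nonneg hx.le (sq_nonneg y), hx.le, sq_nonneg y, sq_nonneg x]
      have h8 : s ≤ 2 * ((x + 1) ^ 2 * (1 + y ^ 2)) / (2 * t) := by
        rw [hs, div_le_div_iff₀ (by positivity) (by positivity)]
        nlinarith [mul_le_mul_of_nonneg_right hnum (by positivity : (0:ℝ) ≤ 2 * t)]
      have h9 : 2 * ((x + 1) ^ 2 * (1 + y ^ 2)) / (2 * t) = (x + 1) ^ 2 / t * (1 + y ^ 2) := by
        field_simp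
      linarith
    have hgy : (0:ℝ) ≤ c ^ 2 * y * Real.exp (-(c * y)) := by positivity
    have key2 : 2 * (c ^ 2 / 2) * y * Real.exp (-(c * y)) * (1 - s)
        ≤ c ^ 2 / 2 * t / x * Real.exp (-(c * y)) * (Real.exp (u - s) - Real.exp (-u - s)) := by
      nlinarith [mul_le_mul_of_nonneg_right key hposy.le]
    calc 2 * (c ^ 2 / 2) * y * Real.exp (-(c * y))
          - c ^ 2 / 2 * t / x * Real.exp (-(c * y)) * (Real.exp (u - s) - Real.exp (-u - s))
        ≤ 2 * (c ^ 2 / 2) * y * Real.exp (-(c * y))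
          - 2 * (c ^ 2 / 2) * y * Real.exp (-(c * y)) * (1 - s) := by linarith [key2]
      _ = (c ^ 2 * y * Real.exp (-(c * y))) * s := by ring
      _ ≤ (c ^ 2 * y * Real.exp (-(c * y))) * ((x + 1) ^ 2 / t * (1 + y ^ 2)) :=
          mul_le_mul_of_nonneg_left hsbound hgy
      _ = (x + 1) ^ 2 / t * (c ^ 2 * y * (1 + y ^ 2) * Real.exp (-(c * y))) := by ring

lemma aux_int1 (c : ℝ) (hc : 0 < c) :
    IntegrableOn (fun y : ℝ => y * Real.exp (-(c * y))) (Set.Ioi 0) := by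
  refine (integrableOn_rpow_mul_exp_neg_mul_rpow (p := 1) (s := 1) (by norm_num) zero_lt_one
    hc).congr_fun (fun y hy => ?_) measurableSet_Ioi
  simp [Real.rpow_one, neg_mul]

lemma aux_int3 (c : ℝ) (hc : 0 < c) :
    IntegrableOn (fun y : ℝ => y ^ 3 * Real.exp (-(c * y))) (Set.Ioi 0) := by
  refine (integrableOn_rpow_mul_exp_neg_mul_rpow (p := 1) (s := 3) (by norm_num) zero_lt_one
    hc).congr_fun (fun y hy => ?_) measurableSet_Ioi
  dsimp only
  rw [Real.rpow_one, show (3 : ℝ) = ((3 : ℕ) : ℝ) by norm_num, Real.rpow_natCast, neg_mul]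

lemma aux_intG (c : ℝ) (hc : 0 < c) :
    IntegrableOn (fun y : ℝ => c ^ 2 * y * (1 + y ^ 2) * Real.exp (-(c * y))) (Set.Ioi 0) := by
  have h : IntegrableOn (fun y : ℝ => c ^ 2 * (y * Real.exp (-(c * y)))
      + c ^ 2 * (y ^ 3 * Real.exp (-(c * y)))) (Set.Ioi 0) :=
    ((aux_int1 c hc).const_mul (c ^ 2)).add ((aux_int3 c hc).const_mul (c ^ 2))
  exact h.congr_fun (fun y hy => by ring) measurableSet_Ioi

lemma aux_intg (c : ℝ) (hc : 0 < c) :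
    IntegrableOn (fun y : ℝ => 2 * (c ^ 2 / 2) * y * Real.exp (-(c * y))) (Set.Ioi 0) := by
  have h : IntegrableOn (fun y : ℝ => c ^ 2 * (y * Real.exp (-(c * y)))) (Set.Ioi 0) :=
    (aux_int1 c hc).const_mul (c ^ 2)
  exact h.congr_fun (fun y hy => by ring) measurableSet_Ioi

lemma aux_val (c : ℝ) (hc : 0 < c) :
    ∫ y in Set.Ioi (0 : ℝ), 2 * (c ^ 2 / 2) * y * Real.exp (-(c * y)) = 1 := by
  have h := Real.integral_rpow_mul_exp_neg_mul_Ioi (a := 2) (r := c) two_pos hc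
  simp only [show (2 : ℝ) - 1 = 1 by norm_num, Real.rpow_one] at h
  rw [Real.Gamma_two, show ((2 : ℝ)) = ((2 : ℕ) : ℝ) by norm_num, Real.rpow_natCast] at h
  calc ∫ y in Set.Ioi (0 : ℝ), 2 * (c ^ 2 / 2) * y * Real.exp (-(c * y))
      = ∫ y in Set.Ioi (0 : ℝ), c ^ 2 * (y * Real.exp (-(c * y))) := by
        refine integral_congr_ae (Filter.Eventually.of_forall fun y => ?_); ring
    _ = c ^ 2 * ∫ y in Set.Ioi (0 : ℝ), y * Real.exp (-(c * y)) := integral_const_mul _ _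
    _ = c ^ 2 * ((1 / c) ^ 2 * 1) := by rw [h]
    _ = 1 := by field_simp

theorem error_term_bound_transition_density
    (c : ℝ) (hc : 0 < c) :
    ∃ C : ℝ, 0 < C ∧
      ∀ (x t : ℝ), 0 < x → 0 < t →
        ∀ B : Set ℝ, MeasurableSet B → B ⊆ Set.Ioi (0 : ℝ) →
          |(t ^ (3 / 2 : ℝ) * Real.exp (c ^ 2 / 2 * t) /
                (x * Real.exp (c * x) / Real.sqrt (2 * π * (c ^ 2 / 2) ^ 2))) *
              (∫ y in B,
                Real.exp (-(c * (y - x)) - c ^ 2 / 2 * t) * (Real.sqrt (2 * π * t))⁻¹ *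
                  (Real.exp (-(x - y) ^ 2 / (2 * t)) - Real.exp (-(x + y) ^ 2 / (2 * t))))
            - ∫ y in B, 2 * (c ^ 2 / 2) * y * Real.exp (-(c * y))|
          ≤ min (C * (x + 1) ^ 2 / t) 2 := by
  have hGI := aux_intG c hc
  have hgI := aux_intg c hc
  refine ⟨1 + ∫ y in Set.Ioi (0 : ℝ), c ^ 2 * y * (1 + y ^ 2) * Real.exp (-(c * y)), ?_, ?_⟩
  · have h0 : 0 ≤ ∫ y in Set.Ioi (0 : ℝ), c ^ 2 * y * (1 + y ^ 2) * Real.exp (-(c * y)) :=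
      setIntegral_nonneg measurableSet_Ioi fun y hy => by
        have : 0 < y := hy; positivity
    linarith
  intro x t hx ht B hB hBsub
  set C : ℝ := 1 + ∫ y in Set.Ioi (0 : ℝ), c ^ 2 * y * (1 + y ^ 2) * Real.exp (-(c * y)) with hC
  set Af : ℝ → ℝ := fun y => c ^ 2 / 2 * t / x * Real.exp (-(c * y)) *
      (Real.exp (-(x - y) ^ 2 / (2 * t)) - Real.exp (-(x + y) ^ 2 / (2 * t))) with hAf
  -- rewrite the scaled integral
  have hrw : (t ^ (3 / 2 : ℝ) * Real.exp (c ^ 2 / 2 * t) /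
        (x * Real.exp (c * x) / Real.sqrt (2 * π * (c ^ 2 / 2) ^ 2))) *
      (∫ y in B,
        Real.exp (-(c * (y - x)) - c ^ 2 / 2 * t) * (Real.sqrt (2 * π * t))⁻¹ *
          (Real.exp (-(x - y) ^ 2 / (2 * t)) - Real.exp (-(x + y) ^ 2 / (2 * t))))
      = ∫ y in B, Af y := by
    rw [← integral_const_mul]
    exact integral_congr_ae (Filter.Eventually.of_forall fun y => aux_ident c x t y hc hx ht)
  rw [hrw]
  -- integrability on B
  have hgB : IntegrableOn (fun y : ℝ => 2 * (c ^ 2 / 2) * y * Real.exp (-(c * y))) B :=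
    hgI.mono_set hBsub
  have hGB : IntegrableOn (fun y : ℝ => c ^ 2 * y * (1 + y ^ 2) * Real.exp (-(c * y))) B :=
    hGI.mono_set hBsub
  have hAfcont : Continuous Af := by fun_prop
  have hAfB : IntegrableOn Af B := by
    refine Integrable.mono hgB hAfcont.aestronglyMeasurable.restrict ?_
    refine (ae_restrict_iff' hB).mpr (Filter.Eventually.of_forall fun y hy => ?_)
    have hy0 : 0 < y := hBsub hy
    obtain ⟨h1, h2, _⟩ := aux_ptwise c x t y hc hx ht hy0
    rw [Real.norm_eq_abs, Real.norm_eq_abs, abs_of_nonneg h1, abs_of_nonneg (by positivity)]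
    exact h2
  -- pointwise facts on B
  have hptB : ∀ y ∈ B, 0 ≤ Af y ∧ Af y ≤ 2 * (c ^ 2 / 2) * y * Real.exp (-(c * y)) ∧
      2 * (c ^ 2 / 2) * y * Real.exp (-(c * y)) - Af y
        ≤ (x + 1) ^ 2 / t * (c ^ 2 * y * (1 + y ^ 2) * Real.exp (-(c * y))) :=
    fun y hy => aux_ptwise c x t y hc hx ht (hBsub hy)
  have hBsub' : (volume.restrict B) ≤ volume.restrict (Set.Ioi 0) := by
    exact Measure.restrict_mono hBsub le_rfl
  refine le_min ?_ ?_
  · -- the C (x+1)^2 / t bound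
    have hstep1 : |(∫ y in B, Af y) - ∫ y in B, 2 * (c ^ 2 / 2) * y * Real.exp (-(c * y))|
        = |∫ y in B, (Af y - 2 * (c ^ 2 / 2) * y * Real.exp (-(c * y)))| := by
      rw [integral_sub hAfB hgB]
    rw [hstep1]
    have hstep2 : |∫ y in B, (Af y - 2 * (c ^ 2 / 2) * y * Real.exp (-(c * y)))|
        ≤ ∫ y in B, |Af y - 2 * (c ^ 2 / 2) * y * Real.exp (-(c * y))| := by
      have := norm_integral_le_integral_norm (μ := volume.restrict B)
        (f := fun y => Af y - 2 * (c ^ 2 / 2) * y * Real.exp (-(c * y)))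
      simpa [Real.norm_eq_abs] using this
    have hstep3 : ∫ y in B, |Af y - 2 * (c ^ 2 / 2) * y * Real.exp (-(c * y))|
        ≤ ∫ y in B, (x + 1) ^ 2 / t * (c ^ 2 * y * (1 + y ^ 2) * Real.exp (-(c * y))) := by
      refine setIntegral_mono_on ((hAfB.sub hgB).abs) (hGB.const_mul _) hB fun y hy => ?_
      obtain ⟨h1, h2, h3⟩ := hptB y hy
      rw [abs_sub_comm, abs_of_nonneg (by linarith)]
      exact h3
    have hstep4 : ∫ y in B, (x + 1) ^ 2 / t * (c ^ 2 * y * (1 + y ^ 2) * Real.exp (-(c * y)))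
        ≤ ∫ y in Set.Ioi (0 : ℝ),
            (x + 1) ^ 2 / t * (c ^ 2 * y * (1 + y ^ 2) * Real.exp (-(c * y))) := by
      refine setIntegral_mono_set (hGI.const_mul _) ?_ (HasSubset.Subset.eventuallyLE hBsub)
      refine (ae_restrict_iff' measurableSet_Ioi).mpr (Filter.Eventually.of_forall fun y hy => ?_)
      have : 0 < y := hy
      positivity
    have hstep5 : ∫ y in Set.Ioi (0 : ℝ),
          (x + 1) ^ 2 / t * (c ^ 2 * y * (1 + y ^ 2) * Real.exp (-(c * y)))
        = (x + 1) ^ 2 / t *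
            ∫ y in Set.Ioi (0 : ℝ), c ^ 2 * y * (1 + y ^ 2) * Real.exp (-(c * y)) :=
      integral_const_mul _ _
    have hCge : ∫ y in Set.Ioi (0 : ℝ), c ^ 2 * y * (1 + y ^ 2) * Real.exp (-(c * y)) ≤ C := by
      rw [hC]; linarith
    have hfin : (x + 1) ^ 2 / t *
          (∫ y in Set.Ioi (0 : ℝ), c ^ 2 * y * (1 + y ^ 2) * Real.exp (-(c * y)))
        ≤ C * (x + 1) ^ 2 / t := by
      rw [show C * (x + 1) ^ 2 / t = (x + 1) ^ 2 / t * C by ring]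
      exact mul_le_mul_of_nonneg_left hCge (by positivity)
    linarith
  · -- the bound by 2
    have h0 : 0 ≤ ∫ y in B, Af y :=
      setIntegral_nonneg hB fun y hy => (hptB y hy).1
    have h1 : (∫ y in B, Af y) ≤ ∫ y in B, 2 * (c ^ 2 / 2) * y * Real.exp (-(c * y)) :=
      setIntegral_mono_on hAfB hgB hB fun y hy => (hptB y hy).2.1
    have h2 : (∫ y in B, 2 * (c ^ 2 / 2) * y * Real.exp (-(c * y)))
        ≤ ∫ y in Set.Ioi (0 : ℝ), 2 * (c ^ 2 / 2) * y * Real.exp (-(c * y)) := by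
      refine setIntegral_mono_set hgI ?_ (HasSubset.Subset.eventuallyLE hBsub)
      refine (ae_restrict_iff' measurableSet_Ioi).mpr (Filter.Eventually.of_forall fun y hy => ?_)
      have : 0 < y := hy
      positivity
    have h3 := aux_val c hc
    rw [abs_le]
    constructor <;> nlinarith
end

section
/- For every c > 0 and x > 0, with λ := c²/2, one has lim_{t→∞} t^{3/2} e^{λ t} ∫_t^∞ x (2π s³)^{−1/2} exp(c x − λ s − x²/(2s)) ds = x e^{c x}/√(2π λ²). That is, t^{3/2} e^{λ t} F(x,t) → h(x) as t → ∞, where F(x,t) is the survival probability of drifted Brownian motion absorbed at 0. -/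
open Real MeasureTheory Filter Set

lemma my_integral_exp_neg_mul_Ioi (b t : ℝ) (hb : 0 < b) :
    ∫ s in Set.Ioi t, Real.exp (-(b * s)) = Real.exp (-(b * t)) / b := by
  have h : ∀ s ∈ Set.Ici t, HasDerivAt (fun u => -(Real.exp (-(b * u)) / b))
      (Real.exp (-(b * s))) s := by
    intro s _
    have h1 : HasDerivAt (fun u : ℝ => -(b * u)) (-b) s := by
      have h0 := ((hasDerivAt_id s).const_mul b).neg
      rw [mul_one] at h0
      exact h0
    have h2 := (h1.exp).div_const b
    convert h2.neg using 1
    exacts [rfl, rfl, rfl, by rw [mul_neg, neg_div, neg_neg, mul_div_cancel_right₀ _ hb.ne']]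
  have hint : IntegrableOn (fun s => Real.exp (-(b * s))) (Set.Ioi t) := by
    simpa [neg_mul] using exp_neg_integrableOn_Ioi t hb
  have hlim : Tendsto (fun u => -(Real.exp (-(b * u)) / b)) atTop (nhds 0) := by
    have h3 : Tendsto (fun u : ℝ => b * u) atTop atTop :=
      Tendsto.const_mul_atTop hb tendsto_id
    have h4 : Tendsto (fun u : ℝ => Real.exp (-(b * u))) atTop (nhds 0) :=
      Real.tendsto_exp_neg_atTop_nhds_zero.comp h3
    simpa using (h4.div_const b).neg
  rw [integral_Ioi_of_hasDerivAt_of_tendsto' h hint hlim]; ring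

lemma my_integral_exp_neg_mul_Ioc (b t u : ℝ) (hb : 0 < b) (htu : t ≤ u) :
    ∫ s in Set.Ioc t u, Real.exp (-(b * s))
      = (Real.exp (-(b * t)) - Real.exp (-(b * u))) / b := by
  have h : ∀ s ∈ Set.uIcc t u, HasDerivAt (fun v => -(Real.exp (-(b * v)) / b))
      (Real.exp (-(b * s))) s := by
    intro s _
    have h1 : HasDerivAt (fun v : ℝ => -(b * v)) (-b) s := by
      have h0 := ((hasDerivAt_id s).const_mul b).neg
      rw [mul_one] at h0
      exact h0
    have h2 := (h1.exp).div_const b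
    convert h2.neg using 1
    exacts [rfl, rfl, rfl, by rw [mul_neg, neg_div, neg_neg, mul_div_cancel_right₀ _ hb.ne']]
  have hint : IntervalIntegrable (fun s => Real.exp (-(b * s))) volume t u :=
    (Real.continuous_exp.comp (by continuity)).intervalIntegrable t u
  have := intervalIntegral.integral_eq_sub_of_hasDerivAt h hint
  rw [← intervalIntegral.integral_of_le htu, this]; ring

lemma my_sqrt_cube (t : ℝ) (ht : 0 < t) :
    Real.sqrt (2 * π * t ^ 3) = Real.sqrt (2 * π) * t ^ ((3:ℝ)/2) := by
  rw [Real.sqrt_mul (by positivity)]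
  congr 1
  rw [Real.sqrt_eq_rpow, ← Real.rpow_natCast t 3, ← Real.rpow_mul ht.le]
  norm_num

theorem survival_probability_asymptotics
    (c x : ℝ) (hc : 0 < c) (hx : 0 < x) :
    Tendsto
      (fun t : ℝ =>
        t ^ (3 / 2 : ℝ) * Real.exp (c ^ 2 / 2 * t) *
          ∫ s in Set.Ioi t,
            x * (Real.sqrt (2 * π * s ^ 3))⁻¹ *
              Real.exp (c * x - c ^ 2 / 2 * s - x ^ 2 / (2 * s)))
      atTop
      (nhds (x * Real.exp (c * x) / Real.sqrt (2 * π * (c ^ 2 / 2) ^ 2))) := by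
  have hπ : 0 < π := Real.pi_pos
  have h2π : (0:ℝ) < 2 * π := by positivity
  set l : ℝ := c ^ 2 / 2 with hl
  have hl0 : 0 < l := by rw [hl]; positivity
  set K : ℝ := x * Real.exp (c * x) / Real.sqrt (2 * π) with hK
  have hval : x * Real.exp (c * x) / Real.sqrt (2 * π * l ^ 2) = K / l := by
    rw [Real.sqrt_mul (by positivity), Real.sqrt_sq hl0.le, hK, div_div]
  rw [hval]
  set g : ℝ → ℝ := fun s =>
    x * (Real.sqrt (2 * π * s ^ 3))⁻¹ * Real.exp (c * x - l * s - x ^ 2 / (2 * s))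
    with hg
  -- continuity and nonnegativity of g
  have hgc : ContinuousOn g (Set.Ioi (0:ℝ)) := by
    refine ContinuousOn.mul (ContinuousOn.mul continuousOn_const
      (ContinuousOn.inv₀ (by fun_prop) ?_)) ?_
    · intro s hs
      have hs0 : (0:ℝ) < s := hs
      exact ne_of_gt (Real.sqrt_pos.mpr (mul_pos h2π (pow_pos hs0 3)))
    · refine Real.continuous_exp.comp_continuousOn ?_
      refine ContinuousOn.sub (ContinuousOn.sub continuousOn_const (by fun_prop)) ?_
      refine ContinuousOn.div continuousOn_const (by fun_prop) ?_
      intro s hs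
      have hs0 : (0:ℝ) < s := hs
      exact ne_of_gt (by linarith)
  have hg_nonneg : ∀ s, 0 ≤ g s := by
    intro s; rw [hg]; positivity
  -- the squeezing functions
  set L : ℝ → ℝ := fun t => K / l * Real.exp (-(x ^ 2 / (2 * t))) *
      (t / (t + Real.sqrt t)) ^ ((3:ℝ)/2) * (1 - Real.exp (-(l * Real.sqrt t))) with hLdef
  have hLlim : Tendsto L atTop (nhds (K / l)) := by
    have h1 : Tendsto (fun t : ℝ => Real.exp (-(x ^ 2 / (2 * t)))) atTop (nhds 1) := by
      have e : Tendsto (fun t : ℝ => -(x ^ 2 / (2 * t))) atTop (nhds 0) := by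
        have : (fun t : ℝ => -(x ^ 2 / (2 * t))) = fun t => -(x ^ 2 / 2 * t⁻¹) := by
          funext t; ring
        rw [this]
        have h' := (tendsto_inv_atTop_zero.const_mul (x ^ 2 / 2)).neg
        rw [mul_zero, neg_zero] at h'
        exact h'
      simpa [Function.comp_def] using (Real.continuous_exp.continuousAt (x := (0:ℝ))).tendsto.comp e
    have hsqrt : Tendsto Real.sqrt atTop atTop :=
      (tendsto_rpow_atTop (by norm_num : (0:ℝ) < 1/2)).congr
        (fun y => (Real.sqrt_eq_rpow y).symm)
    have h2 : Tendsto (fun t : ℝ => (t / (t + Real.sqrt t)) ^ ((3:ℝ)/2)) atTop (nhds 1) := by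
      have base : Tendsto (fun t : ℝ => t / (t + Real.sqrt t)) atTop (nhds 1) := by
        have b1 : Tendsto (fun t : ℝ => 1 + (Real.sqrt t)⁻¹) atTop (nhds 1) := by
          simpa using
            tendsto_const_nhds.add (hsqrt.inv_tendsto_atTop)
        have b2 := (b1.inv₀ one_ne_zero)
        rw [inv_one] at b2
        refine b2.congr' ?_
        filter_upwards [eventually_ge_atTop (1:ℝ)] with t ht
        have ht0 : (0:ℝ) < t := lt_of_lt_of_le one_pos ht
        have hs0 : (0:ℝ) < Real.sqrt t := Real.sqrt_pos.mpr ht0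
        have hts : Real.sqrt t * Real.sqrt t = t := Real.mul_self_sqrt ht0.le
        field_simp
        nlinarith [hts]
      have := base.rpow_const (p := (3:ℝ)/2) (Or.inl one_ne_zero)
      simpa using this
    have h3 : Tendsto (fun t : ℝ => 1 - Real.exp (-(l * Real.sqrt t))) atTop (nhds 1) := by
      have e : Tendsto (fun t : ℝ => Real.exp (-(l * Real.sqrt t))) atTop (nhds 0) :=
        Real.tendsto_exp_neg_atTop_nhds_zero.comp
          (Tendsto.const_mul_atTop hl0 hsqrt)
      simpa using tendsto_const_nhds.sub e
    have := ((tendsto_const_nhds (x := K / l)).mul h1 |>.mul h2).mul h3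
    simpa using this
  refine tendsto_of_tendsto_of_tendsto_of_le_of_le' hLlim
    (tendsto_const_nhds (x := K / l)) ?_ ?_
  · -- lower bound : L t ≤ φ t eventually
    filter_upwards [eventually_ge_atTop (1:ℝ)] with t ht
    have ht0 : (0:ℝ) < t := lt_of_lt_of_le one_pos ht
    have hs0 : (0:ℝ) < Real.sqrt t := Real.sqrt_pos.mpr ht0
    set u : ℝ := t + Real.sqrt t with hu
    have htu : t ≤ u := by rw [hu]; linarith
    have hu0 : (0:ℝ) < u := lt_of_lt_of_le ht0 htu
    set Cl : ℝ := x * Real.exp (c * x) * Real.exp (-(x ^ 2 / (2 * t))) *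
        (Real.sqrt (2 * π * u ^ 3))⁻¹ with hCl
    have hlow : ∀ s ∈ Set.Ioc t u, Cl * Real.exp (-(l * s)) ≤ g s := by
      intro s hs
      have hst : t < s := hs.1
      have hsu : s ≤ u := hs.2
      have hs0' : (0:ℝ) < s := lt_trans ht0 hst
      have e1 : Real.exp (c * x) * Real.exp (-(x ^ 2 / (2 * t))) * Real.exp (-(l * s))
          ≤ Real.exp (c * x - l * s - x ^ 2 / (2 * s)) := by
        rw [← Real.exp_add, ← Real.exp_add]
        apply Real.exp_le_exp.mpr
        have : x ^ 2 / (2 * s) ≤ x ^ 2 / (2 * t) := by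
          apply div_le_div_of_nonneg_left (by positivity) (by linarith) (by linarith)
        linarith
      have e2 : (Real.sqrt (2 * π * u ^ 3))⁻¹ ≤ (Real.sqrt (2 * π * s ^ 3))⁻¹ := by
        apply inv_anti₀ (Real.sqrt_pos.mpr (mul_pos h2π (pow_pos hs0' 3)))
        apply Real.sqrt_le_sqrt
        exact mul_le_mul_of_nonneg_left (pow_le_pow_left₀ hs0'.le hsu 3) h2π.le
      calc Cl * Real.exp (-(l * s))
          = x * (Real.sqrt (2 * π * u ^ 3))⁻¹ *
            (Real.exp (c * x) * Real.exp (-(x ^ 2 / (2 * t))) * Real.exp (-(l * s))) := by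
            rw [hCl]; ring
        _ ≤ x * (Real.sqrt (2 * π * s ^ 3))⁻¹ *
            Real.exp (c * x - l * s - x ^ 2 / (2 * s)) := by
            apply mul_le_mul (mul_le_mul_of_nonneg_left e2 hx.le) e1 (by positivity)
              (by positivity)
        _ = g s := rfl
    -- integrability facts
    have hexp_int : IntegrableOn (fun s => Real.exp (-(l * s))) (Set.Ioi t) := by
      simpa [neg_mul] using exp_neg_integrableOn_Ioi t hl0
    have hIoi_sub : Set.Ioi t ⊆ Set.Ioi (0:ℝ) := fun s hs => lt_trans ht0 hs
    have hbound : ∀ s ∈ Set.Ioi t, g s ≤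
        (x * Real.exp (c * x) * (Real.sqrt (2 * π * t ^ 3))⁻¹) * Real.exp (-(l * s)) := by
      intro s hs
      have hst : t < s := hs
      have hs0' : (0:ℝ) < s := lt_trans ht0 hst
      have e1 : Real.exp (c * x - l * s - x ^ 2 / (2 * s))
          ≤ Real.exp (c * x) * Real.exp (-(l * s)) := by
        rw [← Real.exp_add]
        apply Real.exp_le_exp.mpr
        have : (0:ℝ) ≤ x ^ 2 / (2 * s) := by positivity
        linarith
      have e2 : (Real.sqrt (2 * π * s ^ 3))⁻¹ ≤ (Real.sqrt (2 * π * t ^ 3))⁻¹ := by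
        apply inv_anti₀ (Real.sqrt_pos.mpr (mul_pos h2π (pow_pos ht0 3)))
        apply Real.sqrt_le_sqrt
        exact mul_le_mul_of_nonneg_left (pow_le_pow_left₀ ht0.le hst.le 3) h2π.le
      calc g s = x * (Real.sqrt (2 * π * s ^ 3))⁻¹ *
            Real.exp (c * x - l * s - x ^ 2 / (2 * s)) := rfl
        _ ≤ x * (Real.sqrt (2 * π * t ^ 3))⁻¹ *
            (Real.exp (c * x) * Real.exp (-(l * s))) :=
            mul_le_mul (mul_le_mul_of_nonneg_left e2 hx.le) e1 (by positivity) (by positivity)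
        _ = (x * Real.exp (c * x) * (Real.sqrt (2 * π * t ^ 3))⁻¹) * Real.exp (-(l * s)) := by
            ring
    have hgint : IntegrableOn g (Set.Ioi t) := by
      apply Integrable.mono'
        (hexp_int.const_mul (x * Real.exp (c * x) * (Real.sqrt (2 * π * t ^ 3))⁻¹))
      · exact (hgc.mono hIoi_sub).aestronglyMeasurable measurableSet_Ioi
      · filter_upwards [ae_restrict_mem measurableSet_Ioi] with s hs
        rw [Real.norm_eq_abs, abs_of_nonneg (hg_nonneg s)]
        exact hbound s hs
    have hioc_int_g : IntegrableOn g (Set.Ioc t u) :=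
      hgint.mono_set Set.Ioc_subset_Ioi_self
    have hioc_int_e : IntegrableOn (fun s => Cl * Real.exp (-(l * s))) (Set.Ioc t u) :=
      IntegrableOn.mono_set (hexp_int.const_mul Cl) Set.Ioc_subset_Ioi_self
    have low1 : Cl * ((Real.exp (-(l * t)) - Real.exp (-(l * u))) / l)
        ≤ ∫ s in Set.Ioc t u, g s := by
      calc Cl * ((Real.exp (-(l * t)) - Real.exp (-(l * u))) / l)
          = ∫ s in Set.Ioc t u, Cl * Real.exp (-(l * s)) := by
            rw [MeasureTheory.integral_const_mul, my_integral_exp_neg_mul_Ioc l t u hl0 htu]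
        _ ≤ ∫ s in Set.Ioc t u, g s :=
            setIntegral_mono_on hioc_int_e hioc_int_g measurableSet_Ioc hlow
    have low2 : (∫ s in Set.Ioc t u, g s) ≤ ∫ s in Set.Ioi t, g s := by
      apply setIntegral_mono_set hgint
        (Filter.Eventually.of_forall (fun s => hg_nonneg s))
        (HasSubset.Subset.eventuallyLE Set.Ioc_subset_Ioi_self)
    have key : L t = t ^ ((3:ℝ)/2) * Real.exp (l * t) *
        (Cl * ((Real.exp (-(l * t)) - Real.exp (-(l * u))) / l)) := by
      have hts : (0:ℝ) < t ^ ((3:ℝ)/2) := Real.rpow_pos_of_pos ht0 _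
      have hus : (0:ℝ) < u ^ ((3:ℝ)/2) := Real.rpow_pos_of_pos hu0 _
      have hexp2 : Real.exp (l * t) * (Real.exp (-(l * t)) - Real.exp (-(l * u)))
          = 1 - Real.exp (-(l * Real.sqrt t)) := by
        rw [mul_sub, ← Real.exp_add, ← Real.exp_add]
        congr 1
        · rw [show l * t + -(l * t) = 0 by ring, Real.exp_zero]
        · congr 1
          rw [hu]; ring
      simp only [hLdef]
      rw [← hu, hCl, my_sqrt_cube u hu0, Real.div_rpow ht0.le (le_of_lt hu0), hK,
        mul_inv, ← hexp2]
      ring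
    rw [key]
    have hpos : (0:ℝ) ≤ t ^ ((3:ℝ)/2) * Real.exp (l * t) := by positivity
    exact mul_le_mul_of_nonneg_left (le_trans low1 low2) hpos
  · -- upper bound : φ t ≤ K / l eventually
    filter_upwards [eventually_ge_atTop (1:ℝ)] with t ht
    have ht0 : (0:ℝ) < t := lt_of_lt_of_le one_pos ht
    have hexp_int : IntegrableOn (fun s => Real.exp (-(l * s))) (Set.Ioi t) := by
      simpa [neg_mul] using exp_neg_integrableOn_Ioi t hl0
    have hIoi_sub : Set.Ioi t ⊆ Set.Ioi (0:ℝ) := fun s hs => lt_trans ht0 hs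
    have hbound : ∀ s ∈ Set.Ioi t, g s ≤
        (x * Real.exp (c * x) * (Real.sqrt (2 * π * t ^ 3))⁻¹) * Real.exp (-(l * s)) := by
      intro s hs
      have hst : t < s := hs
      have hs0' : (0:ℝ) < s := lt_trans ht0 hst
      have e1 : Real.exp (c * x - l * s - x ^ 2 / (2 * s))
          ≤ Real.exp (c * x) * Real.exp (-(l * s)) := by
        rw [← Real.exp_add]
        apply Real.exp_le_exp.mpr
        have : (0:ℝ) ≤ x ^ 2 / (2 * s) := by positivity
        linarith
      have e2 : (Real.sqrt (2 * π * s ^ 3))⁻¹ ≤ (Real.sqrt (2 * π * t ^ 3))⁻¹ := by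
        apply inv_anti₀ (Real.sqrt_pos.mpr (mul_pos h2π (pow_pos ht0 3)))
        apply Real.sqrt_le_sqrt
        exact mul_le_mul_of_nonneg_left (pow_le_pow_left₀ ht0.le hst.le 3) h2π.le
      calc g s = x * (Real.sqrt (2 * π * s ^ 3))⁻¹ *
            Real.exp (c * x - l * s - x ^ 2 / (2 * s)) := rfl
        _ ≤ x * (Real.sqrt (2 * π * t ^ 3))⁻¹ *
            (Real.exp (c * x) * Real.exp (-(l * s))) :=
            mul_le_mul (mul_le_mul_of_nonneg_left e2 hx.le) e1 (by positivity) (by positivity)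
        _ = (x * Real.exp (c * x) * (Real.sqrt (2 * π * t ^ 3))⁻¹) * Real.exp (-(l * s)) := by
            ring
    have hgint : IntegrableOn g (Set.Ioi t) := by
      apply Integrable.mono'
        (hexp_int.const_mul (x * Real.exp (c * x) * (Real.sqrt (2 * π * t ^ 3))⁻¹))
      · exact (hgc.mono hIoi_sub).aestronglyMeasurable measurableSet_Ioi
      · filter_upwards [ae_restrict_mem measurableSet_Ioi] with s hs
        rw [Real.norm_eq_abs, abs_of_nonneg (hg_nonneg s)]
        exact hbound s hs
    have up : (∫ s in Set.Ioi t, g s) ≤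
        (x * Real.exp (c * x) * (Real.sqrt (2 * π * t ^ 3))⁻¹) * (Real.exp (-(l * t)) / l) := by
      calc (∫ s in Set.Ioi t, g s)
          ≤ ∫ s in Set.Ioi t,
              (x * Real.exp (c * x) * (Real.sqrt (2 * π * t ^ 3))⁻¹) * Real.exp (-(l * s)) :=
            setIntegral_mono_on hgint
              (hexp_int.const_mul _) measurableSet_Ioi hbound
        _ = (x * Real.exp (c * x) * (Real.sqrt (2 * π * t ^ 3))⁻¹) *
              (Real.exp (-(l * t)) / l) := by
            rw [MeasureTheory.integral_const_mul, my_integral_exp_neg_mul_Ioi l t hl0]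
    have key : t ^ ((3:ℝ)/2) * Real.exp (l * t) *
        ((x * Real.exp (c * x) * (Real.sqrt (2 * π * t ^ 3))⁻¹) *
          (Real.exp (-(l * t)) / l)) = K / l := by
      have hts : (0:ℝ) < t ^ ((3:ℝ)/2) := Real.rpow_pos_of_pos ht0 _
      have hexp1 : Real.exp (l * t) * Real.exp (-(l * t)) = 1 := by
        rw [← Real.exp_add]; simp
      rw [my_sqrt_cube t ht0, mul_inv, hK]
      calc t ^ ((3:ℝ)/2) * Real.exp (l * t) *
            (x * Real.exp (c * x) * ((Real.sqrt (2*π))⁻¹ * (t ^ ((3:ℝ)/2))⁻¹) *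
              (Real.exp (-(l * t)) / l))
          = x * Real.exp (c * x) * (Real.sqrt (2*π))⁻¹ / l *
              (t ^ ((3:ℝ)/2) * (t ^ ((3:ℝ)/2))⁻¹) *
              (Real.exp (l * t) * Real.exp (-(l * t))) := by ring
        _ = x * Real.exp (c * x) / Real.sqrt (2 * π) / l := by
            rw [mul_inv_cancel₀ hts.ne', hexp1]
            ring
    calc t ^ ((3:ℝ)/2) * Real.exp (l * t) * ∫ s in Set.Ioi t, g s
        ≤ t ^ ((3:ℝ)/2) * Real.exp (l * t) *
            ((x * Real.exp (c * x) * (Real.sqrt (2 * π * t ^ 3))⁻¹) *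
              (Real.exp (-(l * t)) / l)) :=
          mul_le_mul_of_nonneg_left up (by positivity)
      _ = K / l := key
end

section
/- For every c > 0, every x > 0 and every Borel set B ⊆ (0,∞), with λ := c²/2, the conditional distribution of the absorbed drifted Brownian motion converges to ν: lim_{t→∞} ( ∫_B p_t(x,y) dy ) / ( ∫_0^∞ p_t(x,y) dy ) = ν(B), where ν is the probability measure on (0,∞) with density 2λ y e^{−c y} dy. -/
open Real MeasureTheory Filter

noncomputable def qsdH (c x t y : ℝ) : ℝ :=
  t / (2 * x) * (Real.exp (-(c * y)) * Real.exp (-(y ^ 2) / (2 * t)) *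
    (Real.exp (x * y / t) - Real.exp (-(x * y / t))))

lemma qsd_integrable_bound {b : ℝ} (hb : 0 < b) :
    IntegrableOn (fun y : ℝ => y * Real.exp (-(b * y))) (Set.Ioi 0) := by
  have := integrableOn_rpow_mul_exp_neg_mul_rpow (p := 1) (s := 1) (b := b)
    (by norm_num) (by norm_num) hb
  simpa [Real.rpow_one, neg_mul] using this

lemma qsd_tendsto_xexp (b : ℝ) (hb : 0 < b) :
    Tendsto (fun y : ℝ => y * Real.exp (-(b * y))) atTop (nhds 0) := by
  have h := (tendsto_pow_mul_exp_neg_atTop_nhds_zero 1).comp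
    (tendsto_id.const_mul_atTop hb)
  have h2 := h.const_mul (1 / b)
  rw [mul_zero] at h2
  refine h2.congr fun y => ?_
  simp only [Function.comp]
  field_simp
  rfl

lemma qsd_integral_value {c : ℝ} (hc : 0 < c) :
    ∫ y in Set.Ioi (0:ℝ), y * Real.exp (-(c * y)) = 1 / c ^ 2 := by
  have hderiv : ∀ y ∈ Set.Ici (0:ℝ),
      HasDerivAt (fun y : ℝ => -((y / c + 1 / c ^ 2) * Real.exp (-(c * y))))
        (y * Real.exp (-(c * y))) y := by
    intro y _
    have h1 : HasDerivAt (fun y : ℝ => y / c + 1 / c ^ 2) (1 / c) y :=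
      ((hasDerivAt_id y).div_const c).add_const _
    have h2 : HasDerivAt (fun y : ℝ => Real.exp (-(c * y)))
        (Real.exp (-(c * y)) * -c) y := by
      have := ((hasDerivAt_id y).const_mul c).neg.exp
      simpa using this
    have := (h1.mul h2).neg
    refine this.congr_deriv ?_
    field_simp
    ring
  have htend : Tendsto (fun y : ℝ => -((y / c + 1 / c ^ 2) * Real.exp (-(c * y))))
      atTop (nhds 0) := by
    have h1 := (qsd_tendsto_xexp c hc).const_mul (1 / c)
    have h2 : Tendsto (fun y : ℝ => Real.exp (-(c * y))) atTop (nhds 0) := by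
      have := Real.tendsto_exp_neg_atTop_nhds_zero.comp (tendsto_id.const_mul_atTop hc)
      exact this.congr fun y => rfl
    have h3 := (h1.add (h2.const_mul (1 / c ^ 2))).neg
    simp only [mul_zero, add_zero, neg_zero] at h3
    refine h3.congr fun y => ?_
    ring
  have := integral_Ioi_of_hasDerivAt_of_tendsto'
    (f' := fun y => y * Real.exp (-(c * y))) hderiv
    (qsd_integrable_bound hc) htend
  rw [this]
  norm_num

lemma qsd_tendsto_H (c x : ℝ) (hc : 0 < c) (hx : 0 < x) {y : ℝ} (hy : 0 < y) :
    Tendsto (fun t : ℝ => qsdH c x t y) atTop (nhds (y * Real.exp (-(c * y)))) := by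
  have hu : Tendsto (fun t : ℝ => x * y / t) atTop (nhds 0) := by
    have := tendsto_inv_atTop_zero.const_mul (x * y)
    rw [mul_zero] at this
    refine this.congr fun t => ?_
    rw [div_eq_mul_inv]
  have hu' : Tendsto (fun t : ℝ => x * y / t) atTop (nhdsWithin (0:ℝ) {(0:ℝ)}ᶜ) := by
    refine tendsto_nhdsWithin_of_tendsto_nhds_of_eventually_within _ hu ?_
    filter_upwards [eventually_gt_atTop (0:ℝ)] with t ht
    have : 0 < x * y / t := by positivity
    exact ne_of_gt this
  have hd : HasDerivAt (fun u : ℝ => Real.exp u - Real.exp (-u)) 2 0 := by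
    have h1 : HasDerivAt Real.exp (Real.exp 0) 0 := Real.hasDerivAt_exp 0
    have h2 : HasDerivAt (fun u : ℝ => Real.exp (-u)) (Real.exp (-(0:ℝ)) * (-1)) 0 :=
      (hasDerivAt_id (0:ℝ)).neg.exp
    refine (h1.sub h2).congr_deriv ?_
    norm_num
  rw [hasDerivAt_iff_tendsto_slope] at hd
  have hcomp : Tendsto (fun t : ℝ => slope (fun u : ℝ => Real.exp u - Real.exp (-u)) 0
      (x * y / t)) atTop (nhds 2) := hd.comp hu'
  have hexp2 : Tendsto (fun t : ℝ => Real.exp (-(y ^ 2) / (2 * t))) atTop (nhds 1) := by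
    have harg : Tendsto (fun t : ℝ => -(y ^ 2) / (2 * t)) atTop (nhds 0) := by
      have h2 := tendsto_inv_atTop_zero.const_mul (-(y ^ 2) / 2)
      rw [mul_zero] at h2
      refine h2.congr fun t => ?_
      simp only [div_eq_mul_inv, mul_inv]
      ring
    have := (Real.continuous_exp.tendsto 0).comp harg
    simpa [Function.comp_def] using this
  have hmain := (tendsto_const_nhds (x := Real.exp (-(c * y))) (f := atTop)).mul hexp2
      |>.mul ((tendsto_const_nhds (x := y / 2) (f := atTop)).mul hcomp)
  have hval : Real.exp (-(c * y)) * 1 * (y / 2 * 2) = y * Real.exp (-(c * y)) := by ring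
  rw [hval] at hmain
  refine hmain.congr' ?_
  filter_upwards [eventually_gt_atTop (0:ℝ)] with t ht
  have ht0 : t ≠ 0 := ne_of_gt ht
  have hu0 : x * y / t ≠ 0 := by positivity
  rw [slope_def_field]
  simp only [Real.exp_zero, neg_zero, sub_zero, sub_self]
  unfold qsdH
  field_simp

lemma qsd_bound_H (c x : ℝ) (hc : 0 < c) (hx : 0 < x) {t y : ℝ}
    (ht : max 1 (2 * x / c) ≤ t) (hy : 0 < y) :
    ‖qsdH c x t y‖ ≤ y * Real.exp (-(c / 2 * y)) := by
  have ht1 : (1:ℝ) ≤ t := le_trans (le_max_left _ _) ht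
  have ht2 : 2 * x / c ≤ t := le_trans (le_max_right _ _) ht
  have ht0 : 0 < t := lt_of_lt_of_le one_pos ht1
  set u := x * y / t with hu_def
  have hu0 : 0 < u := by positivity
  have hsub : 0 ≤ Real.exp u - Real.exp (-u) := by
    have : -u ≤ u := by linarith
    simpa [sub_nonneg] using Real.exp_le_exp.2 this
  have h1 : Real.exp u - Real.exp (-u) ≤ 2 * u * Real.exp u := by
    have hmul : Real.exp u * Real.exp (-(2 * u)) = Real.exp (-u) := by
      rw [← Real.exp_add]; ring_nf
    nlinarith [Real.add_one_le_exp (-(2 * u)), Real.exp_pos u]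
  have h2 : u ≤ c / 2 * y := by
    rw [hu_def, div_le_iff₀ ht0]
    have h2x : 2 * x ≤ c * t := by
      rw [div_le_iff₀ hc] at ht2; linarith
    nlinarith
  have he1 : Real.exp (-(y ^ 2) / (2 * t)) ≤ 1 := by
    apply Real.exp_le_one_iff.2
    have : 0 < 2 * t := by linarith
    apply div_nonpos_of_nonpos_of_nonneg
    · nlinarith
    · positivity
  have hHnn : 0 ≤ qsdH c x t y := by
    unfold qsdH
    have h3 : 0 ≤ t / (2 * x) := by positivity
    have h4 : 0 ≤ Real.exp (-(c * y)) * Real.exp (-(y ^ 2) / (2 * t)) := by positivity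
    exact mul_nonneg h3 (mul_nonneg h4 hsub)
  rw [Real.norm_eq_abs, abs_of_nonneg hHnn]
  have key : qsdH c x t y ≤ y * Real.exp (-(c * y)) * Real.exp u := by
    unfold qsdH
    calc t / (2 * x) * (Real.exp (-(c * y)) * Real.exp (-(y ^ 2) / (2 * t)) *
          (Real.exp (x * y / t) - Real.exp (-(x * y / t))))
        = t / (2 * x) * Real.exp (-(c * y)) *
          (Real.exp (-(y ^ 2) / (2 * t)) * (Real.exp u - Real.exp (-u))) := by
          rw [← hu_def]; ring
      _ ≤ t / (2 * x) * Real.exp (-(c * y)) * (1 * (2 * u * Real.exp u)) := by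
          apply mul_le_mul_of_nonneg_left
          · exact mul_le_mul he1 h1 hsub zero_le_one
          · positivity
      _ = y * Real.exp (-(c * y)) * Real.exp u := by
          rw [hu_def]
          field_simp
  calc qsdH c x t y ≤ y * Real.exp (-(c * y)) * Real.exp u := key
    _ ≤ y * Real.exp (-(c * y)) * Real.exp (c / 2 * y) := by
        apply mul_le_mul_of_nonneg_left (Real.exp_le_exp.2 h2)
        positivity
    _ = y * Real.exp (-(c / 2 * y)) := by
        rw [mul_assoc, ← Real.exp_add]
        congr 2
        ring

lemma qsdH_continuous (c x t : ℝ) : Continuous (fun y => qsdH c x t y) := by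
  unfold qsdH
  fun_prop

theorem conditional_distribution_tendsto_qsd
    (c x : ℝ) (hc : 0 < c) (hx : 0 < x)
    (B : Set ℝ) (hB : MeasurableSet B) (hB0 : B ⊆ Set.Ioi (0 : ℝ)) :
    Tendsto
      (fun t : ℝ =>
        (∫ y in B,
            Real.exp (-(c * (y - x)) - c ^ 2 / 2 * t) * (Real.sqrt (2 * π * t))⁻¹ *
              (Real.exp (-(x - y) ^ 2 / (2 * t)) - Real.exp (-(x + y) ^ 2 / (2 * t)))) /
        (∫ y in Set.Ioi (0 : ℝ),
            Real.exp (-(c * (y - x)) - c ^ 2 / 2 * t) * (Real.sqrt (2 * π * t))⁻¹ *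
              (Real.exp (-(x - y) ^ 2 / (2 * t)) - Real.exp (-(x + y) ^ 2 / (2 * t)))))
      atTop
      (nhds (∫ y in B, 2 * (c ^ 2 / 2) * y * Real.exp (-(c * y)))) := by
  have hc2 : 0 < c / 2 := by linarith
  -- limits of the normalized integrals
  have hN : Tendsto (fun t : ℝ => ∫ y in B, qsdH c x t y) atTop
      (nhds (∫ y in B, y * Real.exp (-(c * y)))) := by
    apply tendsto_integral_filter_of_dominated_convergence
      (fun y => y * Real.exp (-(c / 2 * y)))
    · exact Eventually.of_forall fun t => (qsdH_continuous c x t).aestronglyMeasurable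
    · filter_upwards [eventually_ge_atTop (max 1 (2 * x / c))] with t ht
      rw [ae_restrict_iff' hB]
      exact Eventually.of_forall fun y hy => qsd_bound_H c x hc hx ht (hB0 hy)
    · exact ((qsd_integrable_bound hc2).mono_set hB0)
    · rw [ae_restrict_iff' hB]
      exact Eventually.of_forall fun y hy => qsd_tendsto_H c x hc hx (hB0 hy)
  have hD : Tendsto (fun t : ℝ => ∫ y in Set.Ioi (0:ℝ), qsdH c x t y) atTop
      (nhds (1 / c ^ 2)) := by
    rw [← qsd_integral_value hc]
    apply tendsto_integral_filter_of_dominated_convergence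
      (fun y => y * Real.exp (-(c / 2 * y)))
    · exact Eventually.of_forall fun t => (qsdH_continuous c x t).aestronglyMeasurable
    · filter_upwards [eventually_ge_atTop (max 1 (2 * x / c))] with t ht
      rw [ae_restrict_iff' measurableSet_Ioi]
      exact Eventually.of_forall fun y hy => qsd_bound_H c x hc hx ht hy
    · exact qsd_integrable_bound hc2
    · rw [ae_restrict_iff' measurableSet_Ioi]
      exact Eventually.of_forall fun y hy => qsd_tendsto_H c x hc hx hy
  have hratio := hN.div hD (by positivity)
  have hval : (∫ y in B, y * Real.exp (-(c * y))) / (1 / c ^ 2)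
      = ∫ y in B, 2 * (c ^ 2 / 2) * y * Real.exp (-(c * y)) := by
    have : ∀ y : ℝ, 2 * (c ^ 2 / 2) * y * Real.exp (-(c * y))
        = c ^ 2 * (y * Real.exp (-(c * y))) := fun y => by ring
    simp_rw [this, integral_const_mul]
    field_simp
    simp only [mul_comm c]
  rw [hval] at hratio
  refine hratio.congr' ?_
  filter_upwards [eventually_gt_atTop (0:ℝ)] with t ht
  have ht0 : t ≠ 0 := ne_of_gt ht
  set K : ℝ := Real.exp (c * x - c ^ 2 / 2 * t) * (Real.sqrt (2 * π * t))⁻¹ *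
    Real.exp (-x ^ 2 / (2 * t)) * (2 * x / t) with hK_def
  have hK0 : 0 < K := by
    rw [hK_def]
    have hs : 0 < Real.sqrt (2 * π * t) := Real.sqrt_pos.2 (by positivity)
    positivity
  have hfun : ∀ y : ℝ,
      Real.exp (-(c * (y - x)) - c ^ 2 / 2 * t) * (Real.sqrt (2 * π * t))⁻¹ *
        (Real.exp (-(x - y) ^ 2 / (2 * t)) - Real.exp (-(x + y) ^ 2 / (2 * t)))
      = K * qsdH c x t y := by
    intro y
    have e1 : Real.exp (-(x - y) ^ 2 / (2 * t))
        = Real.exp (-x ^ 2 / (2 * t)) * Real.exp (-(y ^ 2) / (2 * t)) *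
          Real.exp (x * y / t) := by
      rw [← Real.exp_add, ← Real.exp_add]
      congr 1
      field_simp
      ring
    have e2 : Real.exp (-(x + y) ^ 2 / (2 * t))
        = Real.exp (-x ^ 2 / (2 * t)) * Real.exp (-(y ^ 2) / (2 * t)) *
          Real.exp (-(x * y / t)) := by
      rw [← Real.exp_add, ← Real.exp_add]
      congr 1
      field_simp
      ring
    have e3 : Real.exp (-(c * (y - x)) - c ^ 2 / 2 * t)
        = Real.exp (c * x - c ^ 2 / 2 * t) * Real.exp (-(c * y)) := by
      rw [← Real.exp_add]
      congr 1
      ring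
    rw [e1, e2, e3, hK_def]
    unfold qsdH
    field_simp
  simp only [hfun, integral_const_mul]
  rw [mul_div_mul_left _ _ (ne_of_gt hK0)]
  rfl
end

section
/- For every c > 0, t > 0 and x > 0, with λ := c²/2 and h(y) := y e^{c y}/√(2π λ²), one has ∫_0^∞ p_t(x,y) h(y) dy = e^{−λ t} h(x). That is, h is a right eigenfunction of the absorbed drifted Brownian semigroup with eigenvalue e^{−λ t}. -/
open Real MeasureTheory

lemma gauss_integrable_shift (t x : ℝ) (ht : 0 < t) :
    Integrable (fun u : ℝ => u * Real.exp (-(u - x) ^ 2 / (2 * t))) := by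
  have hb : (0 : ℝ) < (2 * t)⁻¹ := by positivity
  have h1 : Integrable (fun u : ℝ => u * Real.exp (-(2 * t)⁻¹ * u ^ 2)) :=
    integrable_mul_exp_neg_mul_sq hb
  have h2 : Integrable (fun u : ℝ => Real.exp (-(2 * t)⁻¹ * u ^ 2)) :=
    integrable_exp_neg_mul_sq hb
  have h3 : Integrable (fun u : ℝ => u * Real.exp (-(2 * t)⁻¹ * u ^ 2)
      + x * Real.exp (-(2 * t)⁻¹ * u ^ 2)) := h1.add (h2.const_mul x)
  have h4 := h3.comp_sub_right x
  convert h4 using 1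
  funext u
  have key : -(u - x) ^ 2 / (2 * t) = -(2 * t)⁻¹ * (u - x) ^ 2 := by
    field_simp
  rw [key]
  ring

lemma gauss_mean (t x : ℝ) (ht : 0 < t) :
    ∫ u : ℝ, u * Real.exp (-(u - x) ^ 2 / (2 * t)) = x * Real.sqrt (2 * π * t) := by
  have hb : (0 : ℝ) < (2 * t)⁻¹ := by positivity
  have h1 : Integrable (fun u : ℝ => u * Real.exp (-(2 * t)⁻¹ * u ^ 2)) :=
    integrable_mul_exp_neg_mul_sq hb
  have h2 : Integrable (fun u : ℝ => Real.exp (-(2 * t)⁻¹ * u ^ 2)) :=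
    integrable_exp_neg_mul_sq hb
  have key : ∀ u : ℝ, -u ^ 2 / (2 * t) = -(2 * t)⁻¹ * u ^ 2 := by
    intro u; field_simp
  have hshift : (∫ u : ℝ, u * Real.exp (-(u - x) ^ 2 / (2 * t)))
      = ∫ u : ℝ, (u + x) * Real.exp (-(2 * t)⁻¹ * u ^ 2) := by
    rw [← integral_add_right_eq_self
      (fun u : ℝ => u * Real.exp (-(u - x) ^ 2 / (2 * t))) x]
    congr 1; ext u
    rw [add_sub_cancel_right, key u]
  rw [hshift]
  have hsplit : (∫ u : ℝ, (u + x) * Real.exp (-(2 * t)⁻¹ * u ^ 2))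
      = (∫ u : ℝ, u * Real.exp (-(2 * t)⁻¹ * u ^ 2))
        + ∫ u : ℝ, x * Real.exp (-(2 * t)⁻¹ * u ^ 2) := by
    rw [← integral_add h1 (h2.const_mul x)]
    congr 1; ext u; ring
  rw [hsplit]
  have hodd : (∫ u : ℝ, u * Real.exp (-(2 * t)⁻¹ * u ^ 2)) = 0 := by
    have h := integral_neg_eq_self (fun u : ℝ => u * Real.exp (-(2 * t)⁻¹ * u ^ 2))
      (volume : Measure ℝ)
    simp only [neg_neg, neg_sq, neg_mul, integral_neg] at h
    simp only [neg_mul]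
    linarith
  rw [hodd, zero_add, integral_const_mul, integral_gaussian]
  have : π / (2 * t)⁻¹ = 2 * π * t := by field_simp
  rw [this]

lemma gauss_halfline (t x : ℝ) (ht : 0 < t) :
    (∫ y in Set.Ioi (0 : ℝ),
        y * (Real.exp (-(x - y) ^ 2 / (2 * t)) - Real.exp (-(x + y) ^ 2 / (2 * t))))
      = x * Real.sqrt (2 * π * t) := by
  set g : ℝ → ℝ := fun u => u * Real.exp (-(u - x) ^ 2 / (2 * t)) with hg
  have hgi : Integrable g := gauss_integrable_shift t x ht
  have heq : ∀ y : ℝ,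
      y * (Real.exp (-(x - y) ^ 2 / (2 * t)) - Real.exp (-(x + y) ^ 2 / (2 * t)))
        = g y + g (-y) := by
    intro y
    simp only [hg]
    have e1 : (x - y) ^ 2 = (y - x) ^ 2 := by ring
    have e2 : (-y - x) ^ 2 = (x + y) ^ 2 := by ring
    rw [e1, e2]; ring
  have hsum : (∫ y in Set.Ioi (0 : ℝ),
      y * (Real.exp (-(x - y) ^ 2 / (2 * t)) - Real.exp (-(x + y) ^ 2 / (2 * t))))
      = (∫ y in Set.Ioi (0 : ℝ), g y) + ∫ y in Set.Ioi (0 : ℝ), g (-y) := by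
    rw [← integral_add hgi.integrableOn (hgi.comp_neg.integrableOn)]
    congr 1; ext y; exact heq y
  rw [hsum, integral_comp_neg_Ioi, neg_zero, add_comm,
    intervalIntegral.integral_Iic_add_Ioi hgi.integrableOn hgi.integrableOn]
  exact gauss_mean t x ht

theorem h_is_right_eigenfunction
    (c t x : ℝ) (hc : 0 < c) (ht : 0 < t) (hx : 0 < x) :
    (∫ y in Set.Ioi (0 : ℝ),
        (Real.exp (-(c * (y - x)) - c ^ 2 / 2 * t) * (Real.sqrt (2 * π * t))⁻¹ *
            (Real.exp (-(x - y) ^ 2 / (2 * t)) - Real.exp (-(x + y) ^ 2 / (2 * t)))) *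
          (y * Real.exp (c * y) / Real.sqrt (2 * π * (c ^ 2 / 2) ^ 2)))
      = Real.exp (-(c ^ 2 / 2) * t) *
          (x * Real.exp (c * x) / Real.sqrt (2 * π * (c ^ 2 / 2) ^ 2)) := by
  set K : ℝ := Real.exp (c * x - c ^ 2 / 2 * t) * (Real.sqrt (2 * π * t))⁻¹
      / Real.sqrt (2 * π * (c ^ 2 / 2) ^ 2) with hK
  have hintegrand : ∀ y : ℝ,
      (Real.exp (-(c * (y - x)) - c ^ 2 / 2 * t) * (Real.sqrt (2 * π * t))⁻¹ *
          (Real.exp (-(x - y) ^ 2 / (2 * t)) - Real.exp (-(x + y) ^ 2 / (2 * t)))) *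
        (y * Real.exp (c * y) / Real.sqrt (2 * π * (c ^ 2 / 2) ^ 2))
      = K * (y * (Real.exp (-(x - y) ^ 2 / (2 * t)) - Real.exp (-(x + y) ^ 2 / (2 * t)))) := by
    intro y
    have : Real.exp (-(c * (y - x)) - c ^ 2 / 2 * t) * Real.exp (c * y)
        = Real.exp (c * x - c ^ 2 / 2 * t) := by
      rw [← Real.exp_add]; congr 1; ring
    rw [hK, ← this]
    ring
  simp only [hintegrand]
  rw [integral_const_mul, gauss_halfline t x ht, hK]
  have hst : Real.sqrt (2 * π * t) ≠ 0 := by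
    positivity
  have hS : Real.sqrt (2 * π * (c ^ 2 / 2) ^ 2) ≠ 0 := by positivity
  have hexp : Real.exp (c * x - c ^ 2 / 2 * t)
      = Real.exp (-(c ^ 2 / 2) * t) * Real.exp (c * x) := by
    rw [← Real.exp_add]; congr 1; ring
  rw [hexp]
  field_simp
end

section
/- For every c > 0, every x > 0 and every Borel set B ⊆ (0,∞), with λ := c²/2, one has lim_{t→∞} t^{3/2} e^{λ t} ∫_B p_t(x,y) dy = h(x) ν(B), where h(x) := x e^{c x}/√(2π λ²) and ν is the measure on (0,∞) with density 2λ y e^{−c y} dy. In particular, ∫_B p_t(x,y) dy ∼ h(x) ν(B) t^{−3/2} e^{−λ t} as t → ∞ whenever ν(B) > 0. -/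
open Real MeasureTheory Filter Set

lemma aux_slope (a b : ℝ) :
    Tendsto (fun t : ℝ => t * (Real.exp (-a / (2 * t)) - Real.exp (-b / (2 * t)))) atTop
      (nhds ((b - a) / 2)) := by
  set g : ℝ → ℝ := fun s => Real.exp (-(a * s)) - Real.exp (-(b * s)) with hgdef
  have hg : HasDerivAt g (b - a) 0 := by
    have h1 : HasDerivAt (fun s : ℝ => Real.exp (-(a * s))) (-a) 0 := by
      have := (((hasDerivAt_id (0 : ℝ)).const_mul a).neg).exp
      simpa using this
    have h2 : HasDerivAt (fun s : ℝ => Real.exp (-(b * s))) (-b) 0 := by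
      have := (((hasDerivAt_id (0 : ℝ)).const_mul b).neg).exp
      simpa using this
    have h12 := h1.sub h2
    rw [show (-a - -b) = b - a by ring] at h12
    exact h12
  have hslope := hasDerivAt_iff_tendsto_slope.mp hg
  have hst : Tendsto (fun t : ℝ => 1 / (2 * t)) atTop (nhdsWithin (0:ℝ) {(0:ℝ)}ᶜ) := by
    rw [tendsto_nhdsWithin_iff]
    constructor
    · have h2t : Tendsto (fun t : ℝ => 2 * t) atTop atTop :=
        (tendsto_id.const_mul_atTop two_pos)
      have := tendsto_inv_atTop_zero.comp h2t
      simpa [Function.comp_def, one_div] using this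
    · filter_upwards [eventually_gt_atTop (0:ℝ)] with t ht
      simp only [Set.mem_compl_iff, Set.mem_singleton_iff]
      positivity
  have hcomp := hslope.comp hst
  have h2 : Tendsto (fun t : ℝ => (1/2 : ℝ) * slope g 0 (1 / (2 * t))) atTop
      (nhds ((1/2) * (b - a))) := hcomp.const_mul _
  refine Tendsto.congr' ?_ (by convert h2 using 2; ring)
  filter_upwards [eventually_gt_atTop (0:ℝ)] with t ht
  have h2t : (2 * t) ≠ 0 := by positivity
  rw [slope_def_field]
  simp only [hgdef]
  field_simp
  ring_nf

lemma aux_exp_diff_le (a b : ℝ) (ha : 0 ≤ a) (hab : a ≤ b) :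
    Real.exp (-a) - Real.exp (-b) ≤ b - a := by
  have h1 : Real.exp (-a) ≤ 1 := Real.exp_le_one_iff.mpr (by linarith)
  have h1' : Real.exp (-(b - a)) ≤ 1 := Real.exp_le_one_iff.mpr (by linarith)
  have h2 : 1 - (b - a) ≤ Real.exp (-(b - a)) := by linarith [Real.add_one_le_exp (-(b - a))]
  have h3 : Real.exp (-a) - Real.exp (-b) = Real.exp (-a) * (1 - Real.exp (-(b - a))) := by
    rw [mul_sub, mul_one, ← Real.exp_add]; ring_nf
  rw [h3]
  calc Real.exp (-a) * (1 - Real.exp (-(b - a))) ≤ 1 * (b - a) :=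
        mul_le_mul h1 (by linarith) (by linarith) one_pos.le
    _ = b - a := one_mul _

lemma aux_Fsimp (c x l t y : ℝ) (ht : 0 < t) (D : ℝ) :
    t ^ (3/2 : ℝ) * Real.exp (l * t) *
      (Real.exp (-(c * (y - x)) - l * t) * (Real.sqrt (2 * π * t))⁻¹ * D)
    = (Real.exp (-(c * (y - x))) / Real.sqrt (2 * π)) * (t * D) := by
  have h2pi : (0:ℝ) ≤ 2 * π := by positivity
  have h32 : t ^ (3/2 : ℝ) = t * Real.sqrt t := by
    rw [show (3/2 : ℝ) = 1 + 1/2 by norm_num, Real.rpow_add ht, Real.rpow_one,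
      ← Real.sqrt_eq_rpow]
  set s2 := Real.sqrt (2 * π) with hs2def
  have hs : Real.sqrt (2 * π * t) = s2 * Real.sqrt t := Real.sqrt_mul h2pi t
  have hexp : Real.exp (l * t) * Real.exp (-(c * (y - x)) - l * t)
      = Real.exp (-(c * (y - x))) := by
    rw [← Real.exp_add]; ring_nf
  have hst : Real.sqrt t ≠ 0 := by positivity
  have hs2 : s2 ≠ 0 := by rw [hs2def]; positivity
  rw [h32, hs]
  field_simp
  rw [← Real.exp_add]; ring_nf

lemma aux_int (c : ℝ) (hc : 0 < c) :
    IntegrableOn (fun y => y * Real.exp (-(c * y))) (Ioi (0:ℝ)) := by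
  have hexp : IntegrableOn (fun y => (2/c) * Real.exp (-(c/2) * y)) (Ioi (0:ℝ)) :=
    (exp_neg_integrableOn_Ioi 0 (by positivity)).const_mul _
  refine Integrable.mono hexp ?_ ?_
  · exact (continuous_id.mul (Real.continuous_exp.comp (by fun_prop))).aestronglyMeasurable
  · rw [ae_restrict_iff' measurableSet_Ioi]
    filter_upwards with y hy
    have hy0 : 0 < y := hy
    have h1 : c * y / 2 ≤ Real.exp (c * y / 2) := by linarith [Real.add_one_le_exp (c * y / 2)]
    have h2 : y ≤ (2 / c) * Real.exp (c * y / 2) := by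
      calc y = (2/c) * (c * y / 2) := by field_simp
        _ ≤ (2/c) * Real.exp (c * y / 2) := mul_le_mul_of_nonneg_left h1 (by positivity)
    have h3 : y * Real.exp (-(c * y)) ≤ (2/c) * Real.exp (-(c/2) * y) := by
      calc y * Real.exp (-(c * y)) ≤ ((2/c) * Real.exp (c * y / 2)) * Real.exp (-(c * y)) :=
            mul_le_mul_of_nonneg_right h2 (Real.exp_pos _).le
        _ = (2/c) * Real.exp (-(c/2) * y) := by
            rw [mul_assoc, ← Real.exp_add]; ring_nf
    rw [Real.norm_eq_abs, Real.norm_eq_abs, abs_of_nonneg (by positivity),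
      abs_of_nonneg (by positivity)]
    exact h3

theorem transition_density_asymptotics
    (c x : ℝ) (hc : 0 < c) (hx : 0 < x)
    (B : Set ℝ) (hB : MeasurableSet B) (hB0 : B ⊆ Set.Ioi (0 : ℝ)) :
    Tendsto
      (fun t : ℝ =>
        t ^ (3 / 2 : ℝ) * Real.exp (c ^ 2 / 2 * t) *
          ∫ y in B,
            Real.exp (-(c * (y - x)) - c ^ 2 / 2 * t) * (Real.sqrt (2 * π * t))⁻¹ *
              (Real.exp (-(x - y) ^ 2 / (2 * t)) - Real.exp (-(x + y) ^ 2 / (2 * t))))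
      atTop
      (nhds ((x * Real.exp (c * x) / Real.sqrt (2 * π * (c ^ 2 / 2) ^ 2)) *
        ∫ y in B, 2 * (c ^ 2 / 2) * y * Real.exp (-(c * y)))) := by
  have hpi : (0:ℝ) < π := Real.pi_pos
  have hl : (0:ℝ) < c ^ 2 / 2 := by positivity
  have hs2 : Real.sqrt (2 * π) ≠ 0 := by positivity
  set f : ℝ → ℝ := fun y => (Real.exp (-(c * (y - x))) / Real.sqrt (2 * π)) * (2 * x * y)
    with hfdef
  have hRHS : (x * Real.exp (c * x) / Real.sqrt (2 * π * (c ^ 2 / 2) ^ 2)) *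
      ∫ y in B, 2 * (c ^ 2 / 2) * y * Real.exp (-(c * y))
      = ∫ y in B, f y := by
    rw [← integral_const_mul]
    congr 1
    funext y
    have hsq : Real.sqrt (2 * π * (c ^ 2 / 2) ^ 2) = Real.sqrt (2 * π) * (c ^ 2 / 2) := by
      rw [Real.sqrt_mul (by positivity), Real.sqrt_sq hl.le]
    have hexp : Real.exp (-(c * (y - x))) = Real.exp (c * x) * Real.exp (-(c * y)) := by
      rw [← Real.exp_add]; ring_nf
    simp only [hfdef]
    rw [hsq, hexp]
    have hc2 : (c:ℝ) ^ 2 / 2 ≠ 0 := ne_of_gt hl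
    field_simp
  rw [hRHS]
  have main := tendsto_integral_filter_of_dominated_convergence (μ := volume.restrict B)
    (l := atTop) (f := f)
    (F := fun (t : ℝ) (y : ℝ) =>
      (t ^ (3 / 2 : ℝ) * Real.exp (c ^ 2 / 2 * t)) *
        (Real.exp (-(c * (y - x)) - c ^ 2 / 2 * t) * (Real.sqrt (2 * π * t))⁻¹ *
          (Real.exp (-(x - y) ^ 2 / (2 * t)) - Real.exp (-(x + y) ^ 2 / (2 * t)))))
    (bound := f)
    ?_ ?_ ?_ ?_
  · exact main.congr fun t => integral_const_mul _ _
  · exact Eventually.of_forall fun t => (Continuous.aestronglyMeasurable (by fun_prop))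
  · filter_upwards [eventually_gt_atTop (0:ℝ)] with t ht
    rw [ae_restrict_iff' hB]
    filter_upwards with y hy
    have hy0 : 0 < y := hB0 hy
    rw [aux_Fsimp c x (c^2/2) t y ht]
    set C := Real.exp (-(c * (y - x))) / Real.sqrt (2 * π) with hCdef
    have hC : 0 ≤ C := by rw [hCdef]; positivity
    set a' := (x - y) ^ 2 / (2 * t) with ha'def
    set b' := (x + y) ^ 2 / (2 * t) with hb'def
    have ha'0 : 0 ≤ a' := by rw [ha'def]; positivity
    have hab : a' ≤ b' := by
      rw [ha'def, hb'def]
      apply div_le_div_of_nonneg_right ?_ (by positivity)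
      nlinarith
    have hDnn : 0 ≤ Real.exp (-a') - Real.exp (-b') := by
      have := Real.exp_le_exp.mpr (neg_le_neg hab)
      linarith
    have hD : Real.exp (-a') - Real.exp (-b') ≤ b' - a' := aux_exp_diff_le a' b' ha'0 hab
    have heq1 : Real.exp (-(x - y) ^ 2 / (2 * t)) = Real.exp (-a') := by
      rw [ha'def, neg_div]
    have heq2 : Real.exp (-(x + y) ^ 2 / (2 * t)) = Real.exp (-b') := by
      rw [hb'def, neg_div]
    rw [heq1, heq2]
    have htd : t * (Real.exp (-a') - Real.exp (-b')) ≤ 2 * x * y := by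
      calc t * (Real.exp (-a') - Real.exp (-b')) ≤ t * (b' - a') :=
            mul_le_mul_of_nonneg_left hD ht.le
        _ = 2 * x * y := by rw [ha'def, hb'def]; field_simp; ring
    rw [Real.norm_eq_abs, abs_of_nonneg (by positivity)]
    exact mul_le_mul_of_nonneg_left htd hC
  · have hi : IntegrableOn (fun y => y * Real.exp (-(c * y))) B :=
      (aux_int c hc).mono_set hB0
    have : f = fun y => (2 * x * Real.exp (c * x) / Real.sqrt (2 * π)) *
        (y * Real.exp (-(c * y))) := by
      funext y
      simp only [hfdef]
      have hexp : Real.exp (-(c * (y - x))) = Real.exp (c * x) * Real.exp (-(c * y)) := by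
        rw [← Real.exp_add]; ring_nf
      rw [hexp]
      field_simp
    rw [this]
    exact hi.const_mul _
  · rw [ae_restrict_iff' hB]
    filter_upwards with y hy
    have hy0 : 0 < y := hB0 hy
    have key := aux_slope ((x - y) ^ 2) ((x + y) ^ 2)
    have key2 := key.const_mul (Real.exp (-(c * (y - x))) / Real.sqrt (2 * π))
    have hfy : f y = (Real.exp (-(c * (y - x))) / Real.sqrt (2 * π)) *
        (((x + y) ^ 2 - (x - y) ^ 2) / 2) := by
      simp only [hfdef]; ring
    rw [hfy]
    refine Tendsto.congr' ?_ key2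
    filter_upwards [eventually_gt_atTop (0:ℝ)] with t ht
    exact (aux_Fsimp c x (c^2/2) t y ht _).symm
end

section
/- For every c > 0 and x > 0 there exist constants C₁, C₂, M₀ > 0, depending only on x and c, such that for every M ≥ M₀ and every integer k ≥ 0, setting a_k := M(1 + k^{3/4}) + c k − x and λ := c²/2, the Gaussian tail satisfies 2 ∫_{a_k}^∞ (2π (k+1))^{−1/2} e^{−u²/(2(k+1))} du ≤ ( C₁ / h( M (1 + (k+1)^{3/4}) ) ) · e^{ −C₂ M² (1 + √k) − λ (k+1) }, where h(y) := y e^{c y}/√(2π λ²). -/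
open Real MeasureTheory

open Set Filter in

lemma aux_exp_int {b aa : ℝ} (hb : 0 < b) :
    ∫ u in Set.Ioi aa, Real.exp (-(b*u)) = Real.exp (-(b*aa))/b := by
  have hd : ∀ u ∈ Set.Ici aa, HasDerivAt (fun u => -(Real.exp (-(b*u))/b)) (Real.exp (-(b*u))) u := by
    intro u _
    have h1 : HasDerivAt (fun u : ℝ => -(b*u)) (-b) u := by
      simpa using ((hasDerivAt_id u).const_mul b).fun_neg
    have h2 := (h1.exp.div_const b).fun_neg
    refine h2.congr_deriv ?_
    rw [mul_neg, neg_div, neg_neg, mul_div_assoc, div_self hb.ne', mul_one]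
  have hint : IntegrableOn (fun u => Real.exp (-(b*u))) (Set.Ioi aa) := by
    simpa [neg_mul] using exp_neg_integrableOn_Ioi aa hb
  have htend : Tendsto (fun u => -(Real.exp (-(b*u))/b)) atTop (nhds 0) := by
    have h0 : Tendsto (fun u : ℝ => -(b*u)) atTop atBot := by
      exact tendsto_neg_atTop_atBot.comp (tendsto_id.const_mul_atTop hb)
    have := (Real.tendsto_exp_atBot.comp h0).neg.div_const b
    simpa [neg_div] using this
  have := integral_Ioi_of_hasDerivAt_of_tendsto' hd hint htend
  rw [this]; field_simp; ring

lemma aux_tail {s aa : ℝ} (hs : 0 < s) (ha : 0 < aa) :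
    ∫ u in Set.Ioi aa, Real.exp (-u^2/(2*s)) ≤ (2*s/aa) * Real.exp (-aa^2/(2*s)) := by
  have h2s : (0:ℝ) < 2*s := by positivity
  have hb : 0 < aa/(2*s) := by positivity
  have hint1 : IntegrableOn (fun u : ℝ => Real.exp (-u^2/(2*s))) (Set.Ioi aa) := by
    have := (integrable_exp_neg_mul_sq (b := 1/(2*s)) (by positivity)).integrableOn (s := Set.Ioi aa)
    refine this.congr_fun (fun u _ => by ring_nf) measurableSet_Ioi
  have hint2 : IntegrableOn (fun u : ℝ => Real.exp (-(aa/(2*s)*u))) (Set.Ioi aa) := by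
    simpa [neg_mul] using exp_neg_integrableOn_Ioi aa hb
  have hmono : ∫ u in Set.Ioi aa, Real.exp (-u^2/(2*s))
      ≤ ∫ u in Set.Ioi aa, Real.exp (-(aa/(2*s)*u)) := by
    refine setIntegral_mono_on hint1 hint2 measurableSet_Ioi ?_
    intro u hu
    have hu' : aa < u := hu
    apply Real.exp_le_exp.2
    rw [div_le_iff₀ h2s]
    have hkey : -(aa/(2*s)*u)*(2*s) = -(aa*u) := by field_simp
    rw [hkey]; nlinarith
  calc ∫ u in Set.Ioi aa, Real.exp (-u^2/(2*s)) ≤ ∫ u in Set.Ioi aa, Real.exp (-(aa/(2*s)*u)) := hmono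
    _ = Real.exp (-(aa/(2*s)*aa))/(aa/(2*s)) := aux_exp_int hb
    _ = (2*s/aa) * Real.exp (-aa^2/(2*s)) := by
        rw [show -(aa/(2*s)*aa) = -aa^2/(2*s) by ring, div_div_eq_mul_div]; ring


lemma poly9 {r : ℝ} (hr : 0 ≤ r) : (r^4+1)^3 ≤ (r^3+1)^4 := by
  nlinarith [mul_nonneg (pow_nonneg hr 3) (sq_nonneg (r^3-r)), mul_nonneg (pow_nonneg hr 3) (sq_nonneg (r^2-r)),
    mul_nonneg (pow_nonneg hr 3) (sq_nonneg (r-1)), mul_nonneg (pow_nonneg hr 4) (sq_nonneg (r^2-r)),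
    mul_nonneg (pow_nonneg hr 5) (sq_nonneg (r^2-r)), mul_nonneg (pow_nonneg hr 6) (sq_nonneg (r-1)),
    mul_nonneg (pow_nonneg hr 3) (sq_nonneg (r^3-1)), pow_nonneg hr 3, pow_nonneg hr 6, pow_nonneg hr 9]

lemma rho_cube {r ρ : ℝ} (hr : 0 ≤ r) (hρ : 0 ≤ ρ) (h4 : ρ^4 = r^4+1) : ρ^3 ≤ r^3+1 := by
  have h1 : (ρ^3)^4 ≤ ((r^3+1))^4 := by
    have : (ρ^3)^4 = (r^4+1)^3 := by rw [← pow_mul, show 3*4 = 4*3 by ring, pow_mul, h4]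
    rw [this]; exact poly9 hr
  exact le_of_pow_le_pow_left₀ (by norm_num) (by positivity) h1


lemma key_poly {r ρ M c x : ℝ} (hr : 0 ≤ r) (hρ3 : ρ^3 ≤ r^3+1)
    (hc : 0 < c) (hx : 0 < x) (h2x : 2*x ≤ M) (h64 : 64*c ≤ M) :
    2*(r^4+1)*(c*(M*(1+ρ^3)) + c^2/2*(r^4+1) + M^2*(1+r^2)/32 - c*x - c^2)
      ≤ (M*(1+r^3)+c*r^4-x)^2 := by
  have hM : 0 < M := by linarith
  -- b bound
  have hb : M*(1+r^3)/2 ≤ M*(1+r^3) - x := by nlinarith [pow_nonneg hr 3]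
  have hbsq : M^2*(1+r^3)^2/4 ≤ (M*(1+r^3) - x)^2 := by
    nlinarith [hb, mul_pos hM (by positivity : (0:ℝ) < 1+r^3)]
  have hsq : (1+r^2)*(r^4+1) ≤ 2*(1+r^3)^2 := by
    nlinarith [mul_nonneg (sq_nonneg (1-r^2)) (sq_nonneg r), sq_nonneg (1-r^2), pow_nonneg hr 3]
  have hb2 : M^2*(1+r^2)*(r^4+1)/8 ≤ (M*(1+r^3) - x)^2 := by nlinarith [sq_nonneg M]
  -- surplus covers deficit
  have hsur : (2+r^3+r^4) ≤ 2*(1+r^2)*(r^4+1) := by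
    nlinarith [sq_nonneg (r - r^2), pow_nonneg hr 2, pow_nonneg hr 6]
  have hcm : 2*c*M ≤ M^2/32 := by nlinarith
  nlinarith [hb2, hbsq, hsur, hcm, mul_pos hM hM, pow_nonneg hr 3, pow_nonneg hr 4,
    mul_nonneg (mul_nonneg hc.le hx.le) (pow_nonneg hr 4),
    mul_nonneg hc.le (pow_nonneg hr 4),
    mul_nonneg (mul_nonneg hc.le hM.le) (pow_nonneg hr 7),
    sq_nonneg (c*r^4), mul_nonneg hc.le hM.le,
    mul_le_mul_of_nonneg_left hρ3 (by positivity : (0:ℝ) ≤ 2*(r^4+1)*c*M)]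


set_option maxHeartbeats 1000000 in
lemma main_est {c x M r ρ : ℝ} (hc : 0 < c) (hx : 0 < x) (hr : 0 ≤ r) (hρ : 0 ≤ ρ)
    (h4 : ρ^4 = r^4+1) (h2x : 2*x ≤ M) (h8 : 8 ≤ M) (h64 : 64*c ≤ M) :
    2 * ∫ u in Set.Ioi (M*(1+r^3)+c*r^4-x),
        (Real.sqrt (2*π) * ρ^2)⁻¹ * Real.exp (-u^2/(2*(r^4+1)))
      ≤ (16*Real.exp (c*x+c^2)/(Real.sqrt (2*π) * Real.sqrt (2*π*(c^2/2)^2)) /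
          (M*(1+ρ^3) * Real.exp (c*(M*(1+ρ^3))) / Real.sqrt (2*π*(c^2/2)^2))) *
        Real.exp (-(1/64)*M^2*(1+r^2) - c^2/2*(r^4+1)) := by
  have hM : 0 < M := by linarith
  have hρ1 : 1 ≤ ρ := by nlinarith [pow_nonneg hρ 2, pow_nonneg hρ 3, pow_nonneg hr 4]
  have hρ3 : ρ^3 ≤ r^3+1 := rho_cube hr hρ h4
  have hρ2le : ρ^2 ≤ 1 + r^2 := by
    nlinarith [h4, sq_nonneg (ρ^2 - (1+r^2)), pow_nonneg hρ 2, pow_nonneg hr 2, sq_nonneg r]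
  set s : ℝ := r^4+1 with hs_def
  set a : ℝ := M*(1+r^3)+c*r^4-x with ha_def
  set y : ℝ := M*(1+ρ^3) with hy_def
  set W : ℝ := Real.sqrt (2*π*(c^2/2)^2) with hW_def
  set A : ℝ := Real.exp (-a^2/(2*s)) with hA_def
  set Ey : ℝ := Real.exp (c*y) with hEy_def
  set E0 : ℝ := Real.exp (c*x+c^2) with hE0_def
  set e64 : ℝ := Real.exp (-(M^2*(1+r^2)/64)) with he64_def
  set Er : ℝ := Real.exp (-(1/64)*M^2*(1+r^2) - c^2/2*s) with hEr_def
  have hs : 0 < s := by rw [hs_def]; positivity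
  have ha : 0 < a := by rw [ha_def]; nlinarith [pow_nonneg hr 3, pow_nonneg hr 4]
  have hy : 0 < y := by rw [hy_def]; nlinarith [pow_nonneg hρ 3]
  have hπ : 0 < Real.sqrt (2*π) := Real.sqrt_pos.mpr (by positivity)
  have hW : 0 < W := by rw [hW_def]; exact Real.sqrt_pos.mpr (by positivity)
  have hA0 : 0 < A := by rw [hA_def]; exact Real.exp_pos _
  have hEy0 : 0 < Ey := by rw [hEy_def]; exact Real.exp_pos _
  have hE00 : 0 < E0 := by rw [hE0_def]; exact Real.exp_pos _
  have he640 : 0 < e64 := by rw [he64_def]; exact Real.exp_pos _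
  have hEr0 : 0 < Er := by rw [hEr_def]; exact Real.exp_pos _
  have hρ20 : (0:ℝ) < ρ^2 := by nlinarith
  -- step 1: integral bound
  have hstep1 : (∫ u in Set.Ioi a, (Real.sqrt (2*π) * ρ^2)⁻¹ * Real.exp (-u^2/(2*s)))
      ≤ (Real.sqrt (2*π) * ρ^2)⁻¹ * ((2*s/a) * A) := by
    rw [integral_const_mul, hA_def]
    have htail := aux_tail hs ha
    have hpos : (0:ℝ) ≤ (Real.sqrt (2*π) * ρ^2)⁻¹ := by positivity
    exact mul_le_mul_of_nonneg_left htail hpos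
  -- exponent bound
  have hexp : c*y + c^2/2*s + M^2*(1+r^2)/32 - c*x - c^2 ≤ a^2/(2*s) := by
    rw [le_div_iff₀ (by positivity)]
    calc (c*y + c^2/2*s + M^2*(1+r^2)/32 - c*x - c^2) * (2*s)
        = 2*(r^4+1)*(c*(M*(1+ρ^3)) + c^2/2*(r^4+1) + M^2*(1+r^2)/32 - c*x - c^2) := by
          rw [hs_def, hy_def]; ring
      _ ≤ (M*(1+r^3)+c*r^4-x)^2 := key_poly hr hρ3 hc hx h2x h64
      _ = a^2 := by rw [ha_def]
  have hA : A ≤ E0 * Real.exp (-(c*y)) * Real.exp (-(c^2/2*s)) * e64 * e64 := by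
    rw [hA_def, hE0_def, he64_def, ← Real.exp_add, ← Real.exp_add, ← Real.exp_add, ← Real.exp_add]
    apply Real.exp_le_exp.2
    rw [neg_div]
    linarith [hexp]
  have h2 : ρ^2 * e64 ≤ 1 := by
    have hM64 : (64:ℝ) ≤ M^2 := by nlinarith
    have hMr : 1 + r^2 ≤ M^2*(1+r^2)/64 := by
      nlinarith [mul_nonneg (by linarith : (0:ℝ) ≤ M^2 - 64) (pow_nonneg hr 2)]
    have he1 : e64 ≤ Real.exp (-(1+r^2)) := by
      rw [he64_def]; apply Real.exp_le_exp.2; linarith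
    have hkey : (1+r^2) * Real.exp (-(1+r^2)) ≤ 1 := by
      rw [Real.exp_neg, mul_inv_le_iff₀ (Real.exp_pos _), one_mul]
      nlinarith [Real.add_one_le_exp (1+r^2), pow_nonneg hr 2]
    calc ρ^2 * e64 ≤ (1+r^2) * Real.exp (-(1+r^2)) :=
          mul_le_mul hρ2le he1 he640.le (by positivity)
      _ ≤ 1 := hkey
  have h3 : y ≤ 4*a := by
    rw [hy_def, ha_def]
    nlinarith [pow_nonneg hr 3, pow_nonneg hr 4, mul_nonneg hc.le (pow_nonneg hr 4),
      mul_nonneg hM.le (pow_nonneg hr 3)]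
  clear_value s a y W A Ey E0 e64 Er
  -- core inequality
  have hcore : 4*s*A*(Real.sqrt (2*π)*y*Ey) ≤ 16*E0*Er*(Real.sqrt (2*π)*(ρ^2*a)) := by
    have hsid : s = ρ^2*ρ^2 := by rw [← h4]; ring
    have hEyA : Real.exp (-(c*y)) * Ey = 1 := by
      rw [hEy_def, ← Real.exp_add]; simp
    have hEr2 : Real.exp (-(c^2/2*s)) * e64 = Er := by
      rw [he64_def, hEr_def, ← Real.exp_add]; ring_nf
    have hK : (0:ℝ) ≤ ρ^2 * (E0 * (Real.exp (-(c^2/2*s)) * e64)) := by positivity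
    calc 4*s*A*(Real.sqrt (2*π)*y*Ey)
        = A * (4*s*(Real.sqrt (2*π)*y*Ey)) := by ring
      _ ≤ (E0 * Real.exp (-(c*y)) * Real.exp (-(c^2/2*s)) * e64 * e64) * (4*s*(Real.sqrt (2*π)*y*Ey)) := by
          exact mul_le_mul_of_nonneg_right hA (by positivity)
      _ = (Real.sqrt (2*π) * ((ρ^2*e64) * (4*y)) * (Real.exp (-(c*y))*Ey)) *
            (ρ^2 * (E0 * (Real.exp (-(c^2/2*s)) * e64))) := by rw [hsid]; ring
      _ ≤ (Real.sqrt (2*π) * (1 * (4*(4*a))) * 1) *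
            (ρ^2 * (E0 * (Real.exp (-(c^2/2*s)) * e64))) := by
          refine mul_le_mul_of_nonneg_right ?_ hK
          rw [hEyA, mul_one, mul_one]
          refine mul_le_mul_of_nonneg_left ?_ hπ.le
          calc (ρ^2*e64) * (4*y) ≤ 1 * (4*(4*a)) := by
                refine mul_le_mul h2 (by linarith) (by positivity) (by norm_num)
            _ = 1 * (4*(4*a)) := rfl
      _ = 16*E0*(Real.exp (-(c^2/2*s)) * e64)*(Real.sqrt (2*π)*(ρ^2*a)) := by ring
      _ = 16*E0*Er*(Real.sqrt (2*π)*(ρ^2*a)) := by rw [hEr2]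
  -- assemble
  have hLHS : 2 * ((Real.sqrt (2*π) * ρ^2)⁻¹ * ((2*s/a) * A)) = (4*s*A)/(Real.sqrt (2*π)*(ρ^2*a)) := by
    field_simp; ring
  have hRHS : (16*E0/(Real.sqrt (2*π) * W) / (y * Ey / W)) * Er
      = (16*E0*Er)/(Real.sqrt (2*π)*y*Ey) := by
    field_simp
  calc 2 * ∫ u in Set.Ioi a, (Real.sqrt (2*π) * ρ^2)⁻¹ * Real.exp (-u^2/(2*s))
      ≤ 2 * ((Real.sqrt (2*π) * ρ^2)⁻¹ * ((2*s/a) * A)) := by linarith [hstep1]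
    _ = (4*s*A)/(Real.sqrt (2*π)*(ρ^2*a)) := hLHS
    _ ≤ (16*E0*Er)/(Real.sqrt (2*π)*y*Ey) := by
        rw [div_le_div_iff₀ (by positivity) (by positivity)]
        exact hcore
    _ = (16*E0/(Real.sqrt (2*π) * W) / (y * Ey / W)) * Er := hRHS.symm


theorem gaussian_tail_bound_exit_probability
    (c x : ℝ) (hc : 0 < c) (hx : 0 < x) :
    ∃ C₁ C₂ M₀ : ℝ, 0 < C₁ ∧ 0 < C₂ ∧ 0 < M₀ ∧
      ∀ M : ℝ, M₀ ≤ M → ∀ k : ℕ,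
        2 * ∫ u in Set.Ioi (M * (1 + (k : ℝ) ^ (3 / 4 : ℝ)) + c * k - x),
              (Real.sqrt (2 * π * ((k : ℝ) + 1)))⁻¹ * Real.exp (-u ^ 2 / (2 * ((k : ℝ) + 1)))
          ≤ (C₁ /
              (M * (1 + ((k : ℝ) + 1) ^ (3 / 4 : ℝ)) *
                  Real.exp (c * (M * (1 + ((k : ℝ) + 1) ^ (3 / 4 : ℝ)))) /
                Real.sqrt (2 * π * (c ^ 2 / 2) ^ 2))) *
            Real.exp (-C₂ * M ^ 2 * (1 + Real.sqrt k) - c ^ 2 / 2 * ((k : ℝ) + 1)) := by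
  refine ⟨16*Real.exp (c*x+c^2)/(Real.sqrt (2*π) * Real.sqrt (2*π*(c^2/2)^2)), 1/64,
    2*x+8+64*c, ?_, by norm_num, by positivity, ?_⟩
  · have hπ : (0:ℝ) < π := Real.pi_pos
    positivity
  intro M hM k
  have hk0 : (0:ℝ) ≤ (k:ℝ) := Nat.cast_nonneg k
  have hk10 : (0:ℝ) ≤ (k:ℝ)+1 := by linarith
  set r : ℝ := (k:ℝ) ^ ((1:ℝ)/4) with hr_def
  set ρ : ℝ := ((k:ℝ)+1) ^ ((1:ℝ)/4) with hρ_def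
  have hr : 0 ≤ r := Real.rpow_nonneg hk0 _
  have hρ : 0 ≤ ρ := Real.rpow_nonneg hk10 _
  have hr4 : r^4 = (k:ℝ) := by
    rw [hr_def, ← Real.rpow_natCast ((k:ℝ) ^ ((1:ℝ)/4)) 4, ← Real.rpow_mul hk0]
    norm_num
  have hρ4 : ρ^4 = (k:ℝ)+1 := by
    rw [hρ_def, ← Real.rpow_natCast (((k:ℝ)+1) ^ ((1:ℝ)/4)) 4, ← Real.rpow_mul hk10]
    norm_num
  have hr3 : ((k:ℝ)) ^ ((3:ℝ)/4) = r^3 := by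
    rw [hr_def, ← Real.rpow_natCast ((k:ℝ) ^ ((1:ℝ)/4)) 3, ← Real.rpow_mul hk0]
    norm_num
  have hρ3 : (((k:ℝ))+1) ^ ((3:ℝ)/4) = ρ^3 := by
    rw [hρ_def, ← Real.rpow_natCast (((k:ℝ)+1) ^ ((1:ℝ)/4)) 3, ← Real.rpow_mul hk10]
    norm_num
  have hsk : Real.sqrt (k:ℝ) = r^2 := by
    rw [hr_def, ← Real.rpow_natCast ((k:ℝ) ^ ((1:ℝ)/4)) 2, ← Real.rpow_mul hk0,
      Real.sqrt_eq_rpow]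
    norm_num
  have hsk1 : Real.sqrt (2*π*((k:ℝ)+1)) = Real.sqrt (2*π) * ρ^2 := by
    rw [Real.sqrt_mul (by positivity : (0:ℝ) ≤ 2*π)]
    congr 1
    rw [hρ_def, ← Real.rpow_natCast (((k:ℝ)+1) ^ ((1:ℝ)/4)) 2, ← Real.rpow_mul hk10,
      Real.sqrt_eq_rpow]
    norm_num
  have h2x : 2*x ≤ M := by linarith
  have h8 : (8:ℝ) ≤ M := by linarith
  have h64 : 64*c ≤ M := by linarith
  have hest := main_est hc hx hr hρ (by rw [hρ4, hr4]) h2x h8 h64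
  calc 2 * ∫ u in Set.Ioi (M * (1 + (k : ℝ) ^ (3 / 4 : ℝ)) + c * k - x),
          (Real.sqrt (2 * π * ((k : ℝ) + 1)))⁻¹ * Real.exp (-u ^ 2 / (2 * ((k : ℝ) + 1)))
      = 2 * ∫ u in Set.Ioi (M*(1+r^3)+c*r^4-x),
          (Real.sqrt (2*π) * ρ^2)⁻¹ * Real.exp (-u^2/(2*(r^4+1))) := by
        rw [hsk1, hr3, hr4]
    _ ≤ (16*Real.exp (c*x+c^2)/(Real.sqrt (2*π) * Real.sqrt (2*π*(c^2/2)^2)) /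
          (M*(1+ρ^3) * Real.exp (c*(M*(1+ρ^3))) / Real.sqrt (2*π*(c^2/2)^2))) *
        Real.exp (-(1/64)*M^2*(1+r^2) - c^2/2*(r^4+1)) := hest
    _ = _ := by
        rw [hρ3, hsk, hr4]
end
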